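/- arXiv:1705.11090 — 5 statements merged into one kernel-verified Lean document; each statement's English description precedes it below -/
import Mathlib

section
/- For every n ≥ 1, the class of all finite structures of the form (A, ≤₁, …, ≤ₙ), where each ≤ᵢ is a linear order on the finite set A, has the Ramsey property: for every integer k ≥ 2 and all structures A and B in the class such that there exists an embedding of A into B, there exists a structure C in the class such that for every coloring of the set of embeddings of A into C with k colors, there is an embedding w of B into C and a color i such that w ∘ e receives color i for every embedding e of A into B. -/
set_option maxRecDepth 8000

open Finset

/-- An embedding between structures with `t` binary relations:
an injective map such that each relation holds iff its image holds. -/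
def IsEmb {t : ℕ} {A B : Type} (R : Fin t → A → A → Prop) (S : Fin t → B → B → Prop)
    (f : A → B) : Prop :=
  Function.Injective f ∧ ∀ i x y, R i x y ↔ S i (f x) (f y)

theorem IsEmb.comp {t : ℕ} {A B C : Type} {R : Fin t → A → A → Prop}
    {S : Fin t → B → B → Prop} {T : Fin t → C → C → Prop} {f : A → B} {g : B → C}
    (hf : IsEmb R S f) (hg : IsEmb S T g) : IsEmb R T (g ∘ f) :=
  ⟨hg.1.comp hf.1, fun i x y => (hf.2 i x y).trans (hg.2 i (f x) (f y))⟩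

/-- A structure consisting of `n` linear orders. -/
def AllLinear {n : ℕ} {A : Type} (R : Fin n → A → A → Prop) : Prop :=
  ∀ i, IsLinearOrder A (R i)



noncomputable def toLO {X : Type} {R : X → X → Prop} (h : IsLinearOrder X R) :
    LinearOrder X where
  le := R
  le_refl x := h.refl x
  le_trans a b c hab hbc := h.trans a b c hab hbc
  le_antisymm a b h1 h2 := h.antisymm a b h1 h2
  le_total a b := h.total a b
  toDecidableLE a b := Classical.propDecidable _

noncomputable def enumE {X : Type} [Fintype X] {R : X → X → Prop} (h : IsLinearOrder X R)
    {t : ℕ} (ht : Fintype.card X = t) : Fin t ≃ X :=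
  letI := toLO h
  (monoEquivOfFin X ht).toEquiv

lemma enumE_le {X : Type} [Fintype X] {R : X → X → Prop} (h : IsLinearOrder X R)
    {t : ℕ} (ht : Fintype.card X = t) (j j' : Fin t) :
    R (enumE h ht j) (enumE h ht j') ↔ j ≤ j' := by
  letI := toLO h
  exact (monoEquivOfFin X ht).le_iff_le

lemma enumE_symm_lt {X : Type} [Fintype X] {R : X → X → Prop} (h : IsLinearOrder X R)
    {t : ℕ} (ht : Fintype.card X = t) {x y : X} (hne : x ≠ y) :
    (enumE h ht).symm x < (enumE h ht).symm y ↔ R x y := by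
  have key : (enumE h ht).symm x ≤ (enumE h ht).symm y ↔ R x y := by
    rw [← enumE_le h ht, Equiv.apply_symm_apply, Equiv.apply_symm_apply]
  constructor
  · intro hlt; exact key.mp (le_of_lt hlt)
  · intro hR
    refine lt_of_le_of_ne (key.mpr hR) ?_
    intro hEq
    exact hne ((enumE h ht).symm.injective hEq)

/-- Encoding of a vector to a natural number, giving coordinate `i` highest priority. -/
noncomputable def enc (n M : ℕ) (i : Fin n) (v : Fin n → Fin M) : ℕ :=
  ((Fintype.equivFin (Fin n → Fin M)) v : ℕ) + (v i : ℕ) * M ^ n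

lemma equivFin_lt (n M : ℕ) (v : Fin n → Fin M) :
    ((Fintype.equivFin (Fin n → Fin M)) v : ℕ) < M ^ n := by
  have h := ((Fintype.equivFin (Fin n → Fin M)) v).2
  simpa [Fintype.card_fun] using h

lemma enc_lt_of_lt {n M : ℕ} (i : Fin n) {v w : Fin n → Fin M} (h : v i < w i) :
    enc n M i v < enc n M i w := by
  have h1 : ((v i : ℕ) + 1) * M ^ n ≤ (w i : ℕ) * M ^ n :=
    Nat.mul_le_mul_right _ h
  have h2 := equivFin_lt n M v
  have h3 := equivFin_lt n M w
  unfold enc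
  nlinarith [h1, h2, h3]

lemma enc_inj {n M : ℕ} (i : Fin n) : Function.Injective (enc n M i) := by
  intro v w h
  have hvw : v i = w i := by
    rcases lt_trichotomy (v i) (w i) with hlt | hEq | hgt
    · exact absurd h (ne_of_lt (enc_lt_of_lt i hlt))
    · exact hEq
    · exact absurd h.symm (ne_of_lt (enc_lt_of_lt i hgt))
  have h2 : ((Fintype.equivFin (Fin n → Fin M)) v : ℕ) =
      ((Fintype.equivFin (Fin n → Fin M)) w : ℕ) := by
    unfold enc at h; rw [hvw] at h; omega
  exact (Fintype.equivFin (Fin n → Fin M)).injective (Fin.val_injective h2)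

/-- The `i`-th canonical linear order on vectors. -/
noncomputable def RC (n M : ℕ) (i : Fin n) (v w : Fin n → Fin M) : Prop :=
  enc n M i v ≤ enc n M i w

lemma allLinear_RC (n M : ℕ) : AllLinear (RC n M) := by
  intro i
  exact { refl := fun a => le_refl _
          trans := fun a b c => Nat.le_trans
          antisymm := fun a b h1 h2 => enc_inj i (le_antisymm h1 h2)
          total := fun a b => Nat.le_total _ _ }

/-- The canonical embedding of a structure into the vector structure determined
by a choice of image sets. -/
noncomputable def build {n : ℕ} {X : Type} [Fintype X] {R : Fin n → X → X → Prop}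
    (h : AllLinear R) {t M : ℕ} (ht : Fintype.card X = t)
    (S : Fin n → Finset (Fin M)) (hS : ∀ i, (S i).card = t) : X → (Fin n → Fin M) :=
  fun x i => (S i).orderEmbOfFin (hS i) ((enumE (h i) ht).symm x)

lemma build_coord_lt {n : ℕ} {X : Type} [Fintype X] {R : Fin n → X → X → Prop}
    (h : AllLinear R) {t M : ℕ} (ht : Fintype.card X = t)
    (S : Fin n → Finset (Fin M)) (hS : ∀ i, (S i).card = t) (i : Fin n)
    {x y : X} (hne : x ≠ y) :
    build h ht S hS x i < build h ht S hS y i ↔ R i x y := by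
  unfold build
  rw [((S i).orderEmbOfFin (hS i)).strictMono.lt_iff_lt]
  exact enumE_symm_lt (h i) ht hne

lemma build_coord_inj {n : ℕ} {X : Type} [Fintype X] {R : Fin n → X → X → Prop}
    (h : AllLinear R) {t M : ℕ} (ht : Fintype.card X = t)
    (S : Fin n → Finset (Fin M)) (hS : ∀ i, (S i).card = t) (i : Fin n) :
    Function.Injective (fun x => build h ht S hS x i) := by
  intro x y hxy
  exact (enumE (h i) ht).symm.injective
    (((S i).orderEmbOfFin (hS i)).injective hxy)

lemma build_isEmb {n : ℕ} (hn : 1 ≤ n) {X : Type} [Fintype X] {R : Fin n → X → X → Prop}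
    (h : AllLinear R) {t M : ℕ} (ht : Fintype.card X = t)
    (S : Fin n → Finset (Fin M)) (hS : ∀ i, (S i).card = t) :
    IsEmb R (RC n M) (build h ht S hS) := by
  constructor
  · intro x y hxy
    exact build_coord_inj h ht S hS ⟨0, hn⟩ (congrFun hxy ⟨0, hn⟩)
  · intro i x y
    rcases eq_or_ne x y with rfl | hne
    · exact ⟨fun _ => le_refl _, fun _ => (h i).refl x⟩
    constructor
    · intro hR
      exact le_of_lt (enc_lt_of_lt i ((build_coord_lt h ht S hS i hne).mpr hR))
    · intro hRC
      by_contra hnR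
      have hR' : R i y x := ((h i).total x y).resolve_left hnR
      have hlt := enc_lt_of_lt i ((build_coord_lt h ht S hS i hne.symm).mpr hR')
      exact absurd hRC (not_le.mpr hlt)

lemma build_comp {n : ℕ} {A B : Type} [Fintype A] [Fintype B]
    {RA : Fin n → A → A → Prop} {RB : Fin n → B → B → Prop}
    (hA : AllLinear RA) (hB : AllLinear RB) {a b M : ℕ}
    (ha : Fintype.card A = a) (hb : Fintype.card B = b)
    (Y : Fin n → Finset (Fin M)) (hY : ∀ i, (Y i).card = b)
    (e : A → B) (he : IsEmb RA RB e) :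
    ∃ (S : Fin n → Finset (Fin M)) (hS : ∀ i, (S i).card = a),
      (∀ i, S i ⊆ Y i) ∧ (build hB hb Y hY) ∘ e = build hA ha S hS := by
  classical
  set u : Fin n → Fin a → Fin M :=
    fun i j => build hB hb Y hY (e (enumE (hA i) ha j)) i with hu
  have humono : ∀ i, StrictMono (u i) := by
    intro i j j' hjj'
    have hne : enumE (hA i) ha j ≠ enumE (hA i) ha j' :=
      fun hEq => absurd ((enumE (hA i) ha).injective hEq) (ne_of_lt hjj')
    have hRA : RA i (enumE (hA i) ha j) (enumE (hA i) ha j') :=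
      (enumE_le (hA i) ha j j').mpr (le_of_lt hjj')
    have hRB : RB i (e (enumE (hA i) ha j)) (e (enumE (hA i) ha j')) :=
      (he.2 i _ _).mp hRA
    have hne' : e (enumE (hA i) ha j) ≠ e (enumE (hA i) ha j') :=
      fun hEq => hne (he.1 hEq)
    exact (build_coord_lt hB hb Y hY i hne').mpr hRB
  set S : Fin n → Finset (Fin M) := fun i => (univ : Finset (Fin a)).image (u i) with hSdef
  have hScard : ∀ i, (S i).card = a := by
    intro i
    rw [hSdef]
    rw [card_image_of_injective _ (humono i).injective, card_univ, Fintype.card_fin]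
  have hmemS : ∀ i j, u i j ∈ S i := by
    intro i j; rw [hSdef]; exact mem_image_of_mem _ (mem_univ j)
  refine ⟨S, hScard, ?_, ?_⟩
  · intro i z hz
    rw [hSdef] at hz
    obtain ⟨j, -, rfl⟩ := mem_image.mp hz
    exact orderEmbOfFin_mem _ _ _
  · funext x
    funext i
    have hui : u i = (S i).orderEmbOfFin (hScard i) :=
      orderEmbOfFin_unique (hScard i) (hmemS i) (humono i)
    have h1 : (build hB hb Y hY ∘ e) x i = u i ((enumE (hA i) ha).symm x) := by
      rw [hu]
      simp only [Function.comp_apply, Equiv.apply_symm_apply]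
    rw [h1, hui]
    rfl

/-- Statement of the 1-dimensional finite Ramsey theorem for subset size `a`,
target size `m`, colors `κ`, with bound `N`. -/
def R1 (a : ℕ) (κ : Type) (m N : ℕ) : Prop :=
  ∀ (α : Type) [LinearOrder α] (V : Finset α), N ≤ V.card → ∀ χ : Finset α → κ,
    ∃ Y : Finset α, Y ⊆ V ∧ Y.card = m ∧ ∃ c : κ, ∀ S ⊆ Y, S.card = a → χ S = c

theorem ramsey_claim (a : ℕ) (κ : Type) [Fintype κ] [Nonempty κ]
    (IH : ∀ m' : ℕ, ∃ N, R1 a κ m' N) (r : ℕ) :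
    ∃ N : ℕ, ∀ (α : Type) [LinearOrder α] (V : Finset α), N ≤ V.card →
      ∀ χ : Finset α → κ,
      ∃ (x : Fin r → α) (c : Fin r → κ), StrictMono x ∧ (∀ j, x j ∈ V) ∧
        ∀ (j : Fin r) (S : Finset α), S.card = a →
          (∀ y ∈ S, ∃ j', j < j' ∧ y = x j') → χ (insert (x j) S) = c j := by
  induction r with
  | zero =>
    refine ⟨0, ?_⟩
    intro α _ V _ χ
    exact ⟨Fin.elim0, Fin.elim0, fun i => i.elim0, fun j => j.elim0, fun j => j.elim0⟩
  | succ r ih =>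
    obtain ⟨N₁, h₁⟩ := ih
    obtain ⟨N₂, h₂⟩ := IH N₁
    refine ⟨N₂ + 1, ?_⟩
    intro α _ V hV χ
    have hVne : V.Nonempty := card_pos.mp (by omega)
    set x₀ := V.min' hVne with hx₀
    have hx₀V : x₀ ∈ V := V.min'_mem hVne
    have hV' : N₂ ≤ (V.erase x₀).card := by
      rw [card_erase_of_mem hx₀V]; omega
    obtain ⟨Y, hYsub, hYcard, c₀, hY⟩ := h₂ α (V.erase x₀) hV' (fun S => χ (insert x₀ S))
    obtain ⟨x, c, hmono, hmem, hprop⟩ := h₁ α Y (le_of_eq hYcard.symm) χ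
    have hxV : ∀ j, x j ∈ V := fun j => mem_of_mem_erase (hYsub (hmem j))
    have hx0lt : ∀ j, x₀ < x j := fun j =>
      lt_of_le_of_ne (V.min'_le _ (hxV j)) (Ne.symm (ne_of_mem_erase (hYsub (hmem j))))
    refine ⟨Fin.cons x₀ x, Fin.cons c₀ c, ?_, ?_, ?_⟩
    · intro i j hij
      induction j using Fin.cases with
      | zero => exact absurd hij (Fin.not_lt_zero i)
      | succ j =>
        induction i using Fin.cases with
        | zero => simpa using hx0lt j
        | succ i =>
          simp only [Fin.cons_succ]
          exact hmono (Fin.succ_lt_succ_iff.mp hij)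
    · intro j
      induction j using Fin.cases with
      | zero => simpa using hx₀V
      | succ j => simpa using hxV j
    · intro j S hS hmemS
      induction j using Fin.cases with
      | zero =>
        simp only [Fin.cons_zero]
        refine hY S (fun y hy => ?_) hS
        obtain ⟨j', _, rfl⟩ := hmemS y hy
        induction j' using Fin.cases with
        | zero => simp_all
        | succ j' => simpa using hmem j'
      | succ j =>
        simp only [Fin.cons_succ]
        refine hprop j S hS (fun y hy => ?_)
        obtain ⟨j', hlt, rfl⟩ := hmemS y hy
        induction j' using Fin.cases with
        | zero => exact absurd hlt (Fin.not_lt_zero _)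
        | succ j' =>
          exact ⟨j', by simpa using hlt, by simp⟩

theorem ramsey_one (a : ℕ) (κ : Type) [Fintype κ] [Nonempty κ] (m : ℕ) :
    ∃ N, R1 a κ m N := by
  induction a generalizing m with
  | zero =>
    refine ⟨m, ?_⟩
    intro α _ V hV χ
    obtain ⟨Y, hYV, hYcard⟩ := exists_subset_card_eq hV
    refine ⟨Y, hYV, hYcard, χ ∅, fun S _ hS => ?_⟩
    rw [card_eq_zero.mp hS]
  | succ a IH =>
    rcases Nat.eq_zero_or_pos m with rfl | hm
    · refine ⟨0, ?_⟩
      intro α _ V _ χ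
      refine ⟨∅, empty_subset _, card_empty, Classical.arbitrary κ, ?_⟩
      intro S hS hScard
      rw [subset_empty.mp hS] at hScard; simp at hScard
    obtain ⟨N, hN⟩ := ramsey_claim a κ (fun m' => IH m') (Fintype.card κ * (m - 1) + 1)
    refine ⟨N, ?_⟩
    intro α _ V hV χ
    classical
    obtain ⟨x, c, hmono, hmem, hprop⟩ := hN α V hV χ
    obtain ⟨c₀, hc₀⟩ := Fintype.exists_lt_card_fiber_of_mul_lt_card (f := c) (n := m - 1)
      (by simp)
    have hmle : m ≤ #(filter (fun x => c x = c₀) univ) := by omega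
    obtain ⟨J, hJsub, hJcard⟩ := exists_subset_card_eq hmle
    refine ⟨J.image x, ?_, ?_, c₀, ?_⟩
    · intro y hy; obtain ⟨j, _, rfl⟩ := mem_image.mp hy; exact hmem j
    · rw [card_image_of_injective _ hmono.injective, hJcard]
    · intro S hSsub hScard
      have hSne : S.Nonempty := card_pos.mp (by omega)
      have hy₀ := S.min'_mem hSne
      obtain ⟨j, hjJ, hj⟩ := mem_image.mp (hSsub hy₀)
      have hcj : c j = c₀ := by
        have := hJsub hjJ; simpa using this
      have key : χ (insert (x j) (S.erase (S.min' hSne))) = c j := by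
        refine hprop j _ (by rw [card_erase_of_mem hy₀, hScard]; omega) ?_
        intro y hy
        have hyS : y ∈ S := mem_of_mem_erase hy
        obtain ⟨j', hj'J, hj'⟩ := mem_image.mp (hSsub hyS)
        refine ⟨j', ?_, hj'.symm⟩
        rw [← hmono.lt_iff_lt]
        rw [hj, hj']
        exact lt_of_le_of_ne (S.min'_le _ hyS) (Ne.symm (ne_of_mem_erase hy))
      rw [hj, insert_erase hy₀] at key
      rw [key, hcj]

theorem ramsey_prod (n a m : ℕ) (κ : Type) [Fintype κ] [Nonempty κ] :
    ∃ N : ℕ, ∀ M : ℕ, N ≤ M → ∀ χ : (Fin n → Finset (Fin M)) → κ,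
      ∃ (Y : Fin n → Finset (Fin M)) (c : κ), (∀ i, (Y i).card = m) ∧
        ∀ S : Fin n → Finset (Fin M), (∀ i, S i ⊆ Y i ∧ (S i).card = a) → χ S = c := by
  induction n with
  | zero =>
    refine ⟨0, ?_⟩
    intro M _ χ
    refine ⟨fun i => i.elim0, χ (fun i => i.elim0), fun i => i.elim0, ?_⟩
    intro S _
    congr 1
    exact funext fun i => i.elim0
  | succ n IH =>
    obtain ⟨N₁, h₁⟩ := IH
    obtain ⟨N₀, h₀⟩ := ramsey_one a ((Fin n → Finset (Fin N₁)) → κ) m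
    refine ⟨max N₀ N₁, ?_⟩
    intro M hM χ
    classical
    have hN₁M : N₁ ≤ M := le_trans (le_max_right _ _) hM
    set emb : Fin N₁ ↪ Fin M := Fin.castLEEmb hN₁M with hemb
    set χ₀ : Finset (Fin M) → ((Fin n → Finset (Fin N₁)) → κ) :=
      fun S₀ T => χ (Fin.cons S₀ (fun i => (T i).map emb)) with hχ₀
    obtain ⟨Y₀, -, hY₀card, c₀, hY₀⟩ := h₀ (Fin M) univ
      (by simpa using le_trans (le_max_left _ _) hM) χ₀
    obtain ⟨Y', c, hY'card, hY'⟩ := h₁ N₁ le_rfl c₀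
    refine ⟨Fin.cons Y₀ (fun i => (Y' i).map emb), c, ?_, ?_⟩
    · intro i
      induction i using Fin.cases with
      | zero => simpa using hY₀card
      | succ i => simpa using hY'card i
    · intro S hS
      set T : Fin n → Finset (Fin N₁) := fun i => (Y' i).filter (fun z => emb z ∈ S i.succ)
        with hT
      have hmap : ∀ i, (T i).map emb = S i.succ := by
        intro i
        ext u
        simp only [hT, mem_map, mem_filter]
        constructor
        · rintro ⟨z, ⟨-, hz⟩, rfl⟩; exact hz
        · intro hu
          have h2 := (hS i.succ).1 hu
          rw [Fin.cons_succ] at h2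
          obtain ⟨z, hz, rfl⟩ := mem_map.mp h2
          exact ⟨z, ⟨hz, hu⟩, rfl⟩
      have hTcard : ∀ i, (T i).card = a := by
        intro i
        have h3 := congrArg Finset.card (hmap i)
        rwa [card_map, (hS i.succ).2] at h3
      have hSeq : S = Fin.cons (S 0) (fun i => (T i).map emb) := by
        funext j
        induction j using Fin.cases with
        | zero => simp
        | succ j => simp [hmap j]
      rw [hSeq]
      have h4 : χ₀ (S 0) = c₀ := by
        refine hY₀ (S 0) ?_ (hS 0).2
        have h5 := (hS 0).1; rwa [Fin.cons_zero] at h5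
      exact (congrFun h4 T).trans (hY' T (fun i => ⟨filter_subset _ _, hTcard i⟩))

/-- For every `n ≥ 1`, the class of all finite structures consisting of `n`
linear orders has the Ramsey property. -/
theorem finite_multiple_linear_orders_ramsey (n : ℕ) (hn : 1 ≤ n) (k : ℕ) (hk : 2 ≤ k)
    (A B : Type) [Fintype A] [Fintype B]
    (RA : Fin n → A → A → Prop) (RB : Fin n → B → B → Prop)
    (hA : AllLinear RA) (hB : AllLinear RB)
    (hAB : ∃ f : A → B, IsEmb RA RB f) :
    ∃ (C : Type) (_ : Fintype C) (RC : Fin n → C → C → Prop),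
      AllLinear RC ∧
      ∀ χ : {f : A → C // IsEmb RA RC f} → Fin k,
        ∃ (w : {g : B → C // IsEmb RB RC g}) (i : Fin k),
          ∀ e : {f : A → B // IsEmb RA RB f},
            χ ⟨w.1 ∘ e.1, e.2.comp w.2⟩ = i := by
  classical
  haveI : Nonempty (Fin k) := ⟨⟨0, by omega⟩⟩
  obtain ⟨N, hN⟩ := ramsey_prod n (Fintype.card A) (Fintype.card B) (Fin k)
  refine ⟨Fin n → Fin N, inferInstance, RC n N, allLinear_RC n N, ?_⟩
  intro χ
  obtain ⟨Y, c, hYcard, hmono⟩ := hN N le_rfl (fun S =>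
    if h : ∀ i, (S i).card = Fintype.card A then
      χ ⟨build hA rfl S h, build_isEmb hn hA rfl S h⟩
    else ⟨0, by omega⟩)
  refine ⟨⟨build hB rfl Y hYcard, build_isEmb hn hB rfl Y hYcard⟩, c, ?_⟩
  intro e
  obtain ⟨S, hS, hSsub, hcomp⟩ := build_comp hA hB rfl rfl Y hYcard e.1 e.2
  have h2 := hmono S (fun i => ⟨hSsub i, hS i⟩)
  simp only [dif_pos hS] at h2
  have h3 : (⟨build hB rfl Y hYcard ∘ e.1,
      IsEmb.comp e.2 (build_isEmb hn hB rfl Y hYcard)⟩ :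
      {f : A → (Fin n → Fin N) // IsEmb RA (RC n N) f}) =
      ⟨build hA rfl S hS, build_isEmb hn hA rfl S hS⟩ := Subtype.ext hcomp
  rw [h3]
  exact h2
end

section
/- Let Σ₁, …, Σₙ (n ≥ 2) be pairwise disjoint relational first-order languages (no function or constant symbols), and for each i let Kᵢ be a class of finite Σᵢ-structures which has the hereditary property (with respect to all finite Σᵢ-structures), the joint embedding property, the strong amalgamation property, and the Ramsey property. Then the class ⊗ᵢ Kᵢ, consisting of all finite structures over the union language Θ = Σ₁ ∪ … ∪ Σₙ whose Σᵢ-reduct belongs to Kᵢ for every i ∈ {1, …, n}, has the Ramsey property. -/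
/-- A relational first-order language: a type of relation symbols, each with an arity. -/
structure RelLang : Type 1 where
  Rel : Type
  ar : Rel → ℕ

/-- A structure for a relational language `L` on a carrier `A`: an interpretation
of each relation symbol as a set of tuples. -/
def RelStruc (L : RelLang) (A : Type) : Type :=
  ∀ r : L.Rel, (Fin (L.ar r) → A) → Prop

/-- An embedding between `L`-structures: an injective map such that every
relation holds of a tuple iff it holds of its image. -/
def IsEmbS {L : RelLang} {A B : Type} (SA : RelStruc L A) (SB : RelStruc L B)
    (f : A → B) : Prop :=
  Function.Injective f ∧ ∀ (r : L.Rel) (x : Fin (L.ar r) → A), SA r x ↔ SB r (f ∘ x)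

theorem IsEmbS.comp {L : RelLang} {A B C : Type} {SA : RelStruc L A}
    {SB : RelStruc L B} {SC : RelStruc L C} {f : A → B} {g : B → C}
    (hf : IsEmbS SA SB f) (hg : IsEmbS SB SC g) : IsEmbS SA SC (g ∘ f) :=
  ⟨hg.1.comp hf.1, fun r x => (hf.2 r x).trans (hg.2 r (f ∘ x))⟩

/-- The disjoint union `Θ = Σ₁ ∪ … ∪ Σₙ` of the languages `L 0, …, L (n-1)`. -/
def unionLang {n : ℕ} (L : Fin n → RelLang) : RelLang :=
  ⟨Σ i : Fin n, (L i).Rel, fun r => (L r.1).ar r.2⟩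

/-- The `Σᵢ`-reduct of a `Θ`-structure. -/
def reduct {n : ℕ} {L : Fin n → RelLang} (i : Fin n) {A : Type}
    (S : RelStruc (unionLang L) A) : RelStruc (L i) A :=
  fun r x => S ⟨i, r⟩ x

/-- Hereditary property with respect to all finite `L`-structures. -/
def HP (L : RelLang) (K : ∀ A : Type, RelStruc L A → Prop) : Prop :=
  ∀ (B C : Type), Finite B → ∀ (SB : RelStruc L B) (SC : RelStruc L C),
    K C SC → (∃ f : B → C, IsEmbS SB SC f) → K B SB

/-- Joint embedding property. -/
def JEP (L : RelLang) (K : ∀ A : Type, RelStruc L A → Prop) : Prop :=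
  ∀ (A B : Type) (SA : RelStruc L A) (SB : RelStruc L B), K A SA → K B SB →
    ∃ (C : Type) (SC : RelStruc L C), K C SC ∧
      (∃ f : A → C, IsEmbS SA SC f) ∧ (∃ g : B → C, IsEmbS SB SC g)

/-- Strong amalgamation property. -/
def SAP (L : RelLang) (K : ∀ A : Type, RelStruc L A → Prop) : Prop :=
  ∀ (A B C : Type) (SA : RelStruc L A) (SB : RelStruc L B) (SC : RelStruc L C),
    K A SA → K B SB → K C SC →
    ∀ (f₁ : A → B) (f₂ : A → C), IsEmbS SA SB f₁ → IsEmbS SA SC f₂ →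
    ∃ (D : Type) (SD : RelStruc L D), K D SD ∧
      ∃ (g₁ : B → D) (g₂ : C → D), IsEmbS SB SD g₁ ∧ IsEmbS SC SD g₂ ∧
        g₁ ∘ f₁ = g₂ ∘ f₂ ∧
        Set.range g₁ ∩ Set.range g₂ = Set.range (g₁ ∘ f₁) ∧
        Set.range (g₁ ∘ f₁) = Set.range (g₂ ∘ f₂)

/-- The Ramsey property for a class of `L`-structures. -/
def RamseyClass (L : RelLang) (K : ∀ A : Type, RelStruc L A → Prop) : Prop :=
  ∀ k : ℕ, 2 ≤ k → ∀ (A B : Type) (SA : RelStruc L A) (SB : RelStruc L B),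
    K A SA → K B SB → (∃ f : A → B, IsEmbS SA SB f) →
    ∃ (C : Type) (SC : RelStruc L C), K C SC ∧
      ∀ χ : {f : A → C // IsEmbS SA SC f} → Fin k,
        ∃ (w : {g : B → C // IsEmbS SB SC g}) (i : Fin k),
          ∀ e : {f : A → B // IsEmbS SA SB f},
            χ ⟨w.1 ∘ e.1, e.2.comp w.2⟩ = i

/-! ### Basic helpers -/

theorem reduct_embS {n : ℕ} {L : Fin n → RelLang} {A B : Type}
    {SA : RelStruc (unionLang L) A} {SB : RelStruc (unionLang L) B} {f : A → B}
    (hf : IsEmbS SA SB f) (i : Fin n) : IsEmbS (reduct i SA) (reduct i SB) f :=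
  ⟨hf.1, fun r x => hf.2 ⟨i, r⟩ x⟩

/-- Pull back a structure along a map. -/
def pullStruc {L : RelLang} {A B : Type} (f : A → B) (SB : RelStruc L B) : RelStruc L A :=
  fun r x => SB r (f ∘ x)

theorem pullStruc_emb {L : RelLang} {A B : Type} (f : A → B) (hf : Function.Injective f)
    (SB : RelStruc L B) : IsEmbS (pullStruc f SB) SB f :=
  ⟨hf, fun _ _ => Iff.rfl⟩

/-- Ramsey property for colourings by an arbitrary finite type. -/
theorem ramseyFin {L : RelLang} {K : ∀ A : Type, RelStruc L A → Prop}
    (hRam : RamseyClass L K) (S : Type) [Finite S]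
    {A B : Type} {SA : RelStruc L A} {SB : RelStruc L B}
    (hA : K A SA) (hB : K B SB) (f₀ : A → B) (hf₀ : IsEmbS SA SB f₀) :
    ∃ (C : Type) (SC : RelStruc L C), K C SC ∧
      ∀ χ : {f : A → C // IsEmbS SA SC f} → S,
        ∃ (w : {g : B → C // IsEmbS SB SC g}) (s : S),
          ∀ e : {f : A → B // IsEmbS SA SB f},
            χ ⟨w.1 ∘ e.1, e.2.comp w.2⟩ = s := by
  obtain ⟨m, ⟨eqv⟩⟩ := Finite.exists_equiv_fin S
  obtain ⟨C, SC, hC, hW⟩ := hRam (m + 2) (by omega) A B SA SB hA hB ⟨f₀, hf₀⟩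
  refine ⟨C, SC, hC, fun χ => ?_⟩
  obtain ⟨w, i, hmono⟩ := hW (fun g => Fin.castLE (by omega) (eqv (χ g)))
  refine ⟨w, χ ⟨w.1 ∘ f₀, hf₀.comp w.2⟩, fun e => ?_⟩
  have h3 := (hmono e).trans (hmono ⟨f₀, hf₀⟩).symm
  exact eqv.injective (Fin.castLE_injective _ h3)

/-! ### Duplicating a point via strong amalgamation -/

theorem dupPoint {L : RelLang} {K : ∀ A : Type, RelStruc L A → Prop}
    (hHP : HP L K) (hSAP : SAP L K)
    {D E : Type} (SD : RelStruc L D) {SE : RelStruc L E}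
    (hE : K E SE) (hfinE : Finite E) (π : E → D)
    (hbu : ∀ (r : L.Rel) (z : Fin (L.ar r) → E),
      (∀ a b, π (z a) = π (z b) → z a = z b) → (SE r z ↔ SD r (π ∘ z)))
    (x : E) :
    ∃ (E' : Type) (SE' : RelStruc L E'), K E' SE' ∧ Finite E' ∧
      ∃ (j : E → E') (y : E') (π' : E' → D),
        Function.Injective j ∧ y ∉ Set.range j ∧ (∀ e, π' (j e) = π e) ∧ π' y = π x ∧
        (∀ (r : L.Rel) (z : Fin (L.ar r) → E'),
          (∀ a b, π' (z a) = π' (z b) → z a = z b) → (SE' r z ↔ SD r (π' ∘ z))) := by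
  classical
  haveI := hfinE
  let A₀ := {e : E // e ≠ x}
  let SA₀ : RelStruc L A₀ := pullStruc Subtype.val SE
  have hvalemb : IsEmbS SA₀ SE Subtype.val := pullStruc_emb _ Subtype.val_injective _
  have hA₀ : K A₀ SA₀ := hHP A₀ E inferInstance SA₀ SE hE ⟨Subtype.val, hvalemb⟩
  obtain ⟨D₀, S₀, hD₀, g₁, g₂, hg₁, hg₂, hcomm, hr₁, hr₂⟩ :=
    hSAP A₀ E E SA₀ SE SE hA₀ hE hE Subtype.val Subtype.val hvalemb hvalemb
  have hcomm' : ∀ a : A₀, g₁ a.val = g₂ a.val := fun a => congrFun hcomm a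
  -- If `g₁ e = g₂ e'` then both come from the common part.
  have hW1 : ∀ e e' : E, g₁ e = g₂ e' → e = e' ∧ e ≠ x := by
    intro e e' h
    have h1 : g₁ e ∈ Set.range g₁ ∩ Set.range g₂ := ⟨⟨e, rfl⟩, ⟨e', h.symm⟩⟩
    rw [hr₁] at h1
    obtain ⟨a, ha⟩ := h1
    have hea : a.val = e := hg₁.1 ha
    have h2 : g₂ e' = g₂ a.val := by
      rw [← h, ← ha]
      exact hcomm' a
    have he'a : e' = a.val := hg₂.1 h2
    refine ⟨?_, ?_⟩
    · rw [← hea, he'a]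
    · rw [← hea]; exact a.2
  have hne : ∀ e : E, g₁ e ≠ g₂ x := by
    intro e h
    obtain ⟨h1, h2⟩ := hW1 e x h
    exact h2 h1
  let E' := {z : D₀ // z ∈ Set.range g₁ ∪ Set.range g₂}
  let SE' : RelStruc L E' := pullStruc Subtype.val S₀
  have hfin' : Finite E' := ((Set.finite_range g₁).union (Set.finite_range g₂)).to_subtype
  have hE' : K E' SE' :=
    hHP E' D₀ hfin' SE' S₀ hD₀ ⟨Subtype.val, pullStruc_emb _ Subtype.val_injective _⟩
  let j : E → E' := fun e => ⟨g₁ e, Set.mem_union_left _ ⟨e, rfl⟩⟩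
  let y : E' := ⟨g₂ x, Set.mem_union_right _ ⟨x, rfl⟩⟩
  have hg₂ex : ∀ z : D₀, z ∈ Set.range g₁ ∪ Set.range g₂ → (¬ ∃ e, g₁ e = z) →
      ∃ e, g₂ e = z := by
    intro z hz h
    rcases hz with h₁ | h₂
    · exact absurd h₁ h
    · exact h₂
  let π' : E' → D := fun z =>
    if h : ∃ e, g₁ e = z.val then π h.choose else π (hg₂ex z.val z.2 h).choose
  have hπ'g₁ : ∀ (z : E') (e : E), g₁ e = z.val → π' z = π e := by
    intro z e he
    have hpos : ∃ e', g₁ e' = z.val := ⟨e, he⟩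
    show (if h : ∃ e', g₁ e' = z.val then π h.choose else π (hg₂ex z.val z.2 h).choose) = π e
    rw [dif_pos hpos]
    exact congrArg π (hg₁.1 (hpos.choose_spec.trans he.symm))
  have hπ'g₂ : ∀ (z : E') (e : E), g₂ e = z.val → π' z = π e := by
    intro z e he
    show (if h : ∃ e', g₁ e' = z.val then π h.choose else π (hg₂ex z.val z.2 h).choose) = π e
    by_cases hpos : ∃ e', g₁ e' = z.val
    · rw [dif_pos hpos]
      have h := hW1 hpos.choose e (hpos.choose_spec.trans he.symm)
      exact congrArg π h.1
    · rw [dif_neg hpos]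
      exact congrArg π (hg₂.1 ((hg₂ex z.val z.2 hpos).choose_spec.trans he.symm))
  refine ⟨E', SE', hE', hfin', j, y, π', ?_, ?_, ?_, ?_, ?_⟩
  · intro e e' h
    exact hg₁.1 (congrArg Subtype.val h)
  · rintro ⟨e, he⟩
    exact hne e (congrArg Subtype.val he)
  · intro e; exact hπ'g₁ (j e) e rfl
  · exact hπ'g₂ y x rfl
  · intro r z hz
    by_cases hall : ∀ t, ∃ e, g₁ e = (z t).val
    · choose w hw using hall
      have hπw : ∀ t, π' (z t) = π (w t) := fun t => hπ'g₁ _ _ (hw t)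
      have hpat : ∀ a b, π (w a) = π (w b) → w a = w b := by
        intro a b h
        have h2 : π' (z a) = π' (z b) := by rw [hπw a, hπw b]; exact h
        have h3 := hz a b h2
        apply hg₁.1
        rw [hw a, hw b, h3]
      have hfun : Subtype.val ∘ z = g₁ ∘ w := funext fun t => (hw t).symm
      have hiff1 : SE' r z ↔ S₀ r (g₁ ∘ w) := by
        show S₀ r (Subtype.val ∘ z) ↔ _
        rw [hfun]
      have hπz : π' ∘ z = π ∘ w := funext fun t => hπw t
      rw [hiff1, ← hg₁.2 r w, hbu r w hpat, hπz]
    · push_neg at hall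
      obtain ⟨t₀, ht₀⟩ := hall
      have hz₀ : (z t₀).val = g₂ x := by
        obtain ⟨e, he⟩ := hg₂ex (z t₀).val (z t₀).2 (fun ⟨e, he⟩ => ht₀ e he)
        by_cases hex : e = x
        · rw [← he, hex]
        · exfalso
          exact ht₀ e ((hcomm' ⟨e, hex⟩).trans he)
      have hallg₂ : ∀ t, ∃ e, g₂ e = (z t).val := by
        intro t
        by_cases hex : ∃ e, g₂ e = (z t).val
        · exact hex
        · exfalso
          have h₁ : ∃ e, g₁ e = (z t).val := by
            rcases (z t).2 with h | h
            · exact h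
            · exact absurd h hex
          obtain ⟨e, he⟩ := h₁
          have hex' : e = x := by
            by_contra hne'
            exact hex ⟨e, ((hcomm' ⟨e, hne'⟩).symm.trans he)⟩
          have hpa : π' (z t) = π x := hπ'g₁ _ x (by rw [← hex']; exact he)
          have hpb : π' (z t₀) = π x := hπ'g₂ _ x hz₀.symm
          have hzz := hz t t₀ (hpa.trans hpb.symm)
          apply hne x
          calc g₁ x = (z t).val := by rw [← hex']; exact he
            _ = (z t₀).val := congrArg Subtype.val hzz
            _ = g₂ x := hz₀
      choose w hw using hallg₂
      have hπw : ∀ t, π' (z t) = π (w t) := fun t => hπ'g₂ _ _ (hw t)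
      have hpat : ∀ a b, π (w a) = π (w b) → w a = w b := by
        intro a b h
        have h2 : π' (z a) = π' (z b) := by rw [hπw a, hπw b]; exact h
        have h3 := hz a b h2
        apply hg₂.1
        rw [hw a, hw b, h3]
      have hfun : Subtype.val ∘ z = g₂ ∘ w := funext fun t => (hw t).symm
      have hiff1 : SE' r z ↔ S₀ r (g₂ ∘ w) := by
        show S₀ r (Subtype.val ∘ z) ↔ _
        rw [hfun]
      have hπz : π' ∘ z = π ∘ w := funext fun t => hπw t
      rw [hiff1, ← hg₂.2 r w, hbu r w hpat, hπz]

/-! ### Cloning a set of fibers, and blow-ups -/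

theorem cloneFinset {L : RelLang} {K : ∀ A : Type, RelStruc L A → Prop}
    (hHP : HP L K) (hSAP : SAP L K) {D : Type} (SD : RelStruc L D)
    (s : Finset D) {E : Type} (SE : RelStruc L E) (hE : K E SE) (hfinE : Finite E)
    (π : E → D)
    (hbu : ∀ (r : L.Rel) (z : Fin (L.ar r) → E),
      (∀ a b, π (z a) = π (z b) → z a = z b) → (SE r z ↔ SD r (π ∘ z)))
    (hsur : ∀ d, ∃ e, π e = d) :
    ∃ (E' : Type) (SE' : RelStruc L E'), K E' SE' ∧ Finite E' ∧
      ∃ (j : E → E') (ν : ∀ d, d ∈ s → E') (π' : E' → D),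
        Function.Injective j ∧ (∀ e, π' (j e) = π e) ∧
        (∀ d hd, π' (ν d hd) = d) ∧
        (∀ d hd, ν d hd ∉ Set.range j) ∧
        (∀ d hd d' hd', ν d hd = ν d' hd' → d = d') ∧
        (∀ (r : L.Rel) (z : Fin (L.ar r) → E'),
          (∀ a b, π' (z a) = π' (z b) → z a = z b) → (SE' r z ↔ SD r (π' ∘ z))) := by
  classical
  induction s using Finset.induction_on with
  | empty =>
      exact ⟨E, SE, hE, hfinE, id, fun d hd => absurd hd (Finset.notMem_empty d), π,
        Function.injective_id, fun e => rfl,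
        fun d hd => absurd hd (Finset.notMem_empty d),
        fun d hd => absurd hd (Finset.notMem_empty d),
        fun d hd d' hd' _ => absurd hd (Finset.notMem_empty d), hbu⟩
  | @insert a s ha ih =>
      obtain ⟨E₁, SE₁, hE₁, hfin₁, j₁, ν₁, π₁, hj₁, hπ₁j, hν₁π, hν₁r, hν₁i, hbu₁⟩ := ih
      obtain ⟨e₀, he₀⟩ := hsur a
      obtain ⟨E₂, SE₂, hE₂, hfin₂, j₂, y, π₂, hj₂, hyr, hπ₂j, hπ₂y, hbu₂⟩ :=
        dupPoint hHP hSAP SD hE₁ hfin₁ π₁ hbu₁ (j₁ e₀)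
      refine ⟨E₂, SE₂, hE₂, hfin₂, j₂ ∘ j₁,
        (fun d hd => if h : d = a then y
          else j₂ (ν₁ d (Finset.mem_of_mem_insert_of_ne hd h))),
        π₂, hj₂.comp hj₁, ?_, ?_, ?_, ?_, hbu₂⟩
      · intro e
        show π₂ (j₂ (j₁ e)) = π e
        rw [hπ₂j, hπ₁j]
      · intro d hd
        dsimp only
        by_cases h : d = a
        · subst h
          rw [dif_pos rfl, hπ₂y, hπ₁j, he₀]
        · rw [dif_neg h, hπ₂j, hν₁π]
      · intro d hd
        dsimp only
        by_cases h : d = a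
        · rw [dif_pos h]
          rintro ⟨e, he⟩
          exact hyr ⟨j₁ e, he⟩
        · rw [dif_neg h]
          rintro ⟨e, he⟩
          exact hν₁r d _ ⟨e, hj₂ he⟩
      · intro d hd d' hd' hdd
        dsimp only at hdd
        by_cases h : d = a <;> by_cases h' : d' = a
        · rw [h, h']
        · rw [dif_pos h, dif_neg h'] at hdd
          exact absurd ⟨_, hdd.symm⟩ hyr
        · rw [dif_neg h, dif_pos h'] at hdd
          exact absurd ⟨_, hdd⟩ hyr
        · rw [dif_neg h, dif_neg h'] at hdd
          exact hν₁i d _ d' _ (hj₂ hdd)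

theorem blowupAux {L : RelLang} {K : ∀ A : Type, RelStruc L A → Prop}
    (hHP : HP L K) (hSAP : SAP L K) (hKfin : ∀ A SA, K A SA → Finite A)
    {D : Type} (SD : RelStruc L D) (hD : K D SD) (m : ℕ) :
    ∃ (E : Type) (SE : RelStruc L E), K E SE ∧ Finite E ∧
      ∃ (ι : D × Fin m → E) (π : E → D),
        Function.Injective ι ∧ (∀ p, π (ι p) = p.1) ∧ (∀ d, ∃ e, π e = d) ∧
        (∀ (r : L.Rel) (z : Fin (L.ar r) → E),
          (∀ a b, π (z a) = π (z b) → z a = z b) → (SE r z ↔ SD r (π ∘ z))) := by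
  classical
  induction m with
  | zero =>
      refine ⟨D, SD, hD, hKfin D SD hD, fun p => p.1, id,
        fun p q h => p.2.elim0, fun p => rfl, fun d => ⟨d, rfl⟩,
        fun r z _ => Iff.rfl⟩
  | succ m ihm =>
      obtain ⟨E, SE, hE, hfinE, ι, π, hι, hπι, hsur, hbu⟩ := ihm
      haveI : Finite D := hKfin D SD hD
      haveI : Fintype D := Fintype.ofFinite D
      obtain ⟨E', SE', hE', hfin', j, ν, π', hj, hπ'j, hνπ, hνr, hνi, hbu'⟩ :=
        cloneFinset hHP hSAP SD Finset.univ SE hE hfinE π hbu hsur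
      refine ⟨E', SE', hE', hfin',
        (fun p => if h : (p.2 : ℕ) < m then j (ι (p.1, ⟨p.2, h⟩))
          else ν p.1 (Finset.mem_univ _)),
        π', ?_, ?_, ?_, hbu'⟩
      · intro p q h
        dsimp only at h
        by_cases hp : (p.2 : ℕ) < m <;> by_cases hq : (q.2 : ℕ) < m
        · rw [dif_pos hp, dif_pos hq] at h
          have h2 := hι (hj h)
          have h3 := congrArg Prod.fst h2
          have h4 := congrArg (fun w : D × Fin m => (w.2 : ℕ)) h2
          exact Prod.ext h3 (Fin.ext h4)
        · rw [dif_pos hp, dif_neg hq] at h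
          exact absurd ⟨_, h⟩ (hνr q.1 _)
        · rw [dif_neg hp, dif_pos hq] at h
          exact absurd ⟨_, h.symm⟩ (hνr p.1 _)
        · rw [dif_neg hp, dif_neg hq] at h
          have h3 : p.1 = q.1 := hνi _ _ _ _ h
          have h4 : (p.2 : ℕ) = (q.2 : ℕ) := by
            have hpm : (p.2 : ℕ) = m := by omega
            have hqm : (q.2 : ℕ) = m := by omega
            rw [hpm, hqm]
          exact Prod.ext h3 (Fin.ext h4)
      · intro p
        dsimp only
        by_cases hp : (p.2 : ℕ) < m
        · rw [dif_pos hp, hπ'j, hπι]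
        · rw [dif_neg hp, hνπ]
      · intro d
        obtain ⟨e, he⟩ := hsur d
        exact ⟨j e, by rw [hπ'j]; exact he⟩

theorem blowup {L : RelLang} {K : ∀ A : Type, RelStruc L A → Prop}
    (hHP : HP L K) (hSAP : SAP L K) (hKfin : ∀ A SA, K A SA → Finite A)
    {D : Type} (SD : RelStruc L D) (hD : K D SD) (m : ℕ) :
    ∃ (E : Type) (SE : RelStruc L E), K E SE ∧
      ∃ ι : D × Fin m → E, Function.Injective ι ∧
        ∀ (r : L.Rel) (z : Fin (L.ar r) → D × Fin m),
          (∀ a b, (z a).1 = (z b).1 → z a = z b) →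
          (SE r (ι ∘ z) ↔ SD r (fun t => (z t).1)) := by
  obtain ⟨E, SE, hE, _, ι, π, hι, hπι, _, hbu⟩ := blowupAux hHP hSAP hKfin SD hD m
  refine ⟨E, SE, hE, ι, hι, fun r z hz => ?_⟩
  have hpat : ∀ a b, π ((ι ∘ z) a) = π ((ι ∘ z) b) → (ι ∘ z) a = (ι ∘ z) b := by
    intro a b h
    have h2 : (z a).1 = (z b).1 := by
      rw [← hπι (z a), ← hπι (z b)]
      exact h
    exact congrArg ι (hz a b h2)
  have h3 := hbu r (ι ∘ z) hpat
  have h4 : π ∘ (ι ∘ z) = fun t => (z t).1 := funext fun t => hπι (z t)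
  rw [h3, h4]

/-! ### The core theorem for two classes -/

theorem corePair {L₁ L₂ : RelLang}
    {K₁ : ∀ A : Type, RelStruc L₁ A → Prop} {K₂ : ∀ A : Type, RelStruc L₂ A → Prop}
    (hfin₁ : ∀ A SA, K₁ A SA → Finite A) (hfin₂ : ∀ A SA, K₂ A SA → Finite A)
    (hHP₁ : HP L₁ K₁) (hHP₂ : HP L₂ K₂)
    (hSAP₁ : SAP L₁ K₁) (hSAP₂ : SAP L₂ K₂)
    (hRam₁ : RamseyClass L₁ K₁) (hRam₂ : RamseyClass L₂ K₂)
    (k : ℕ) (hk : 2 ≤ k) (A B : Type)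
    (SA₁ : RelStruc L₁ A) (SA₂ : RelStruc L₂ A) (SB₁ : RelStruc L₁ B) (SB₂ : RelStruc L₂ B)
    (hA₁ : K₁ A SA₁) (hA₂ : K₂ A SA₂) (hB₁ : K₁ B SB₁) (hB₂ : K₂ B SB₂)
    (f₀ : A → B) (hf₀₁ : IsEmbS SA₁ SB₁ f₀) (hf₀₂ : IsEmbS SA₂ SB₂ f₀) :
    ∃ (C : Type) (SC₁ : RelStruc L₁ C) (SC₂ : RelStruc L₂ C), K₁ C SC₁ ∧ K₂ C SC₂ ∧
      ∀ χ : {f : A → C // IsEmbS SA₁ SC₁ f ∧ IsEmbS SA₂ SC₂ f} → Fin k,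
        ∃ (w : {g : B → C // IsEmbS SB₁ SC₁ g ∧ IsEmbS SB₂ SC₂ g}) (i : Fin k),
          ∀ e : {f : A → B // IsEmbS SA₁ SB₁ f ∧ IsEmbS SA₂ SB₂ f},
            χ ⟨w.1 ∘ e.1, ⟨e.2.1.comp w.2.1, e.2.2.comp w.2.2⟩⟩ = i := by
  classical
  -- Step 1: Ramsey witness in the second class for `k` colours.
  obtain ⟨D₂, SD₂, hD₂, W₂⟩ := hRam₂ k hk A B SA₂ SB₂ hA₂ hB₂ ⟨f₀, hf₀₂⟩
  haveI : Finite A := hfin₁ A SA₁ hA₁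
  haveI : Finite D₂ := hfin₂ D₂ SD₂ hD₂
  -- Step 2: Ramsey witness in the first class, coloured by functions.
  obtain ⟨D₁, SD₁, hD₁, W₁⟩ :=
    ramseyFin hRam₁ ({f : A → D₂ // IsEmbS SA₂ SD₂ f} → Fin k) hA₁ hB₁ f₀ hf₀₁
  haveI : Finite D₁ := hfin₁ D₁ SD₁ hD₁
  obtain ⟨m₂, ⟨eqv₁⟩⟩ := Finite.exists_equiv_fin D₁
  obtain ⟨m₁, ⟨eqv₂⟩⟩ := Finite.exists_equiv_fin D₂
  -- Step 3: blow up both witnesses.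
  obtain ⟨E₁, SE₁, hE₁, ι₁, hι₁, hbu₁⟩ := blowup hHP₁ hSAP₁ hfin₁ SD₁ hD₁ m₁
  obtain ⟨E₂, SE₂, hE₂, ι₂, hι₂, hbu₂⟩ := blowup hHP₂ hSAP₂ hfin₂ SD₂ hD₂ m₂
  -- The grid structure.
  let SC₁ : RelStruc L₁ (D₁ × D₂) := fun r x => SE₁ r (fun t => ι₁ ((x t).1, eqv₂ (x t).2))
  let SC₂ : RelStruc L₂ (D₁ × D₂) := fun r x => SE₂ r (fun t => ι₂ ((x t).2, eqv₁ (x t).1))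
  have hmem₁ : K₁ (D₁ × D₂) SC₁ := by
    apply hHP₁ (D₁ × D₂) E₁ inferInstance SC₁ SE₁ hE₁
    refine ⟨fun z => ι₁ (z.1, eqv₂ z.2), ⟨?_, fun r x => Iff.rfl⟩⟩
    intro z z' h
    have h2 := hι₁ h
    have h3 := congrArg Prod.fst h2
    have h4 := congrArg Prod.snd h2
    exact Prod.ext h3 (eqv₂.injective h4)
  have hmem₂ : K₂ (D₁ × D₂) SC₂ := by
    apply hHP₂ (D₁ × D₂) E₂ inferInstance SC₂ SE₂ hE₂
    refine ⟨fun z => ι₂ (z.2, eqv₁ z.1), ⟨?_, fun r x => Iff.rfl⟩⟩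
    intro z z' h
    have h2 := hι₂ h
    have h3 := congrArg Prod.fst h2
    have h4 := congrArg Prod.snd h2
    exact Prod.ext (eqv₁.injective h4) h3
  -- Diagonal maps are embeddings (in each coordinate).
  have diag₁ : ∀ (X : Type) (SX₁ : RelStruc L₁ X) (p : X → D₁) (q : X → D₂),
      IsEmbS SX₁ SD₁ p → IsEmbS SX₁ SC₁ (fun a => (p a, q a)) := by
    intro X SX₁ p q hp
    refine ⟨?_, fun r x => ?_⟩
    · intro a b h
      exact hp.1 (congrArg Prod.fst h)
    · have hpat : ∀ a b,
          ((fun t => (p (x t), eqv₂ (q (x t)))) a).1 = ((fun t => (p (x t), eqv₂ (q (x t)))) b).1 →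
          (fun t => (p (x t), eqv₂ (q (x t)))) a = (fun t => (p (x t), eqv₂ (q (x t)))) b := by
        intro a b h
        dsimp only at h ⊢
        rw [hp.1 h]
      have h2 := hbu₁ r (fun t => (p (x t), eqv₂ (q (x t)))) hpat
      show SX₁ r x ↔ SE₁ r (fun t => ι₁ (p (x t), eqv₂ (q (x t))))
      rw [show (fun t => ι₁ (p (x t), eqv₂ (q (x t)))) =
          ι₁ ∘ (fun t => (p (x t), eqv₂ (q (x t)))) from rfl, h2]
      exact hp.2 r x
  have diag₂ : ∀ (X : Type) (SX₂ : RelStruc L₂ X) (p : X → D₁) (q : X → D₂),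
      IsEmbS SX₂ SD₂ q → IsEmbS SX₂ SC₂ (fun a => (p a, q a)) := by
    intro X SX₂ p q hq
    refine ⟨?_, fun r x => ?_⟩
    · intro a b h
      exact hq.1 (congrArg Prod.snd h)
    · have hpat : ∀ a b,
          ((fun t => (q (x t), eqv₁ (p (x t)))) a).1 = ((fun t => (q (x t), eqv₁ (p (x t)))) b).1 →
          (fun t => (q (x t), eqv₁ (p (x t)))) a = (fun t => (q (x t), eqv₁ (p (x t)))) b := by
        intro a b h
        dsimp only at h ⊢
        rw [hq.1 h]
      have h2 := hbu₂ r (fun t => (q (x t), eqv₁ (p (x t)))) hpat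
      show SX₂ r x ↔ SE₂ r (fun t => ι₂ (q (x t), eqv₁ (p (x t))))
      rw [show (fun t => ι₂ (q (x t), eqv₁ (p (x t)))) =
          ι₂ ∘ (fun t => (q (x t), eqv₁ (p (x t)))) from rfl, h2]
      exact hq.2 r x
  refine ⟨D₁ × D₂, SC₁, SC₂, hmem₁, hmem₂, fun χ => ?_⟩
  -- Transfer the colouring through the grid.
  obtain ⟨w₁, F, hm₁⟩ := W₁ (fun p q =>
    χ ⟨fun a => (p.1 a, q.1 a), ⟨diag₁ A SA₁ p.1 q.1 p.2, diag₂ A SA₂ p.1 q.1 q.2⟩⟩)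
  obtain ⟨w₂, i, hm₂⟩ := W₂ F
  refine ⟨⟨fun b => (w₁.1 b, w₂.1 b),
    ⟨diag₁ B SB₁ w₁.1 w₂.1 w₁.2, diag₂ B SB₂ w₁.1 w₂.1 w₂.2⟩⟩, i, fun e => ?_⟩
  have h1 := hm₁ ⟨e.1, e.2.1⟩
  have h3 := congrFun h1 ⟨w₂.1 ∘ e.1, e.2.2.comp w₂.2⟩
  have h2 := hm₂ ⟨e.1, e.2.2⟩
  exact h3.trans h2

/-! ### HP and SAP for product classes -/

theorem prodHP {n : ℕ} (L : Fin n → RelLang)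
    (K : ∀ i : Fin n, ∀ A : Type, RelStruc (L i) A → Prop)
    (hHP : ∀ i, HP (L i) (K i)) :
    HP (unionLang L) (fun A S => Finite A ∧ ∀ i, K i A (reduct i S)) := by
  intro B C hB SB SC hC hf
  obtain ⟨f, hf⟩ := hf
  exact ⟨hB, fun i => hHP i B C hB _ _ (hC.2 i) ⟨f, reduct_embS hf i⟩⟩

theorem prodSAP {n : ℕ} (L : Fin n → RelLang)
    (K : ∀ i : Fin n, ∀ A : Type, RelStruc (L i) A → Prop)
    (hHP : ∀ i, HP (L i) (K i)) (hSAP : ∀ i, SAP (L i) (K i)) :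
    SAP (unionLang L) (fun A S => Finite A ∧ ∀ i, K i A (reduct i S)) := by
  intro A B C SA SB SC hA hB hC f₁ f₂ h₁ h₂
  classical
  haveI : Finite A := hA.1
  haveI : Finite B := hB.1
  haveI : Finite C := hC.1
  let P₀ := B ⊕ {c : C // c ∉ Set.range f₂}
  haveI : Finite P₀ := inferInstance
  let j₂ : C → P₀ := fun c =>
    if h : ∃ a, f₂ a = c then Sum.inl (f₁ h.choose) else Sum.inr ⟨c, fun hc => h hc⟩
  have hj₂f₂ : ∀ a, j₂ (f₂ a) = Sum.inl (f₁ a) := by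
    intro a
    have hpos : ∃ a', f₂ a' = f₂ a := ⟨a, rfl⟩
    unfold j₂
    rw [dif_pos hpos]
    exact congrArg (fun b => Sum.inl (f₁ b)) (h₂.1 hpos.choose_spec)
  have hj₂inr : ∀ c (h : ¬ ∃ a, f₂ a = c), j₂ c = Sum.inr ⟨c, fun hc => h hc⟩ := by
    intro c h
    unfold j₂
    rw [dif_neg h]
  have hj₂inj : Function.Injective j₂ := by
    intro c c' h
    by_cases hc : ∃ a, f₂ a = c <;> by_cases hc' : ∃ a', f₂ a' = c'
    · obtain ⟨a, ha⟩ := hc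
      obtain ⟨a', ha'⟩ := hc'
      rw [← ha, ← ha', hj₂f₂, hj₂f₂] at h
      have := h₁.1 (Sum.inl_injective h)
      rw [← ha, ← ha', this]
    · obtain ⟨a, ha⟩ := hc
      rw [← ha, hj₂f₂, hj₂inr c' hc'] at h
      exact absurd h (by simp)
    · obtain ⟨a', ha'⟩ := hc'
      rw [← ha', hj₂f₂, hj₂inr c hc] at h
      exact absurd h (by simp)
    · rw [hj₂inr c hc, hj₂inr c' hc'] at h
      exact congrArg Subtype.val (Sum.inr_injective h)
  have key : ∀ i : Fin n, ∃ S₀ : RelStruc (L i) P₀,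
      K i P₀ S₀ ∧ IsEmbS (reduct i SB) S₀ Sum.inl ∧ IsEmbS (reduct i SC) S₀ j₂ := by
    intro i
    obtain ⟨D₀, S₀, hD₀, g₁, g₂, hg₁, hg₂, hcomm, hr₁, hr₂⟩ :=
      hSAP i A B C _ _ _ (hA.2 i) (hB.2 i) (hC.2 i) f₁ f₂ (reduct_embS h₁ i) (reduct_embS h₂ i)
    let θ : P₀ → D₀ := Sum.elim g₁ (fun c => g₂ c.1)
    have hθj₂ : ∀ c, θ (j₂ c) = g₂ c := by
      intro c
      by_cases h : ∃ a, f₂ a = c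
      · obtain ⟨a, ha⟩ := h
        rw [← ha, hj₂f₂ a]
        exact congrFun hcomm a
      · rw [hj₂inr c h]
        rfl
    have hθinj : Function.Injective θ := by
      have hmix : ∀ (b : B) (c : {c : C // c ∉ Set.range f₂}), g₁ b ≠ g₂ c.1 := by
        intro b c h
        have h1 : g₁ b ∈ Set.range g₁ ∩ Set.range g₂ := ⟨⟨b, rfl⟩, ⟨c.1, h.symm⟩⟩
        rw [hr₁, hr₂] at h1
        obtain ⟨a, ha⟩ := h1
        exact c.2 ⟨a, hg₂.1 (ha.trans h)⟩
      intro u v h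
      match u, v with
      | Sum.inl b, Sum.inl b' => exact congrArg Sum.inl (hg₁.1 h)
      | Sum.inr c, Sum.inr c' => exact congrArg Sum.inr (Subtype.ext (hg₂.1 h))
      | Sum.inl b, Sum.inr c => exact absurd h (hmix b c)
      | Sum.inr c, Sum.inl b => exact absurd h.symm (hmix b c)
    refine ⟨pullStruc θ S₀, ?_, ?_, ?_⟩
    · exact hHP i P₀ D₀ inferInstance _ S₀ hD₀ ⟨θ, pullStruc_emb θ hθinj S₀⟩
    · exact ⟨Sum.inl_injective, fun r x => hg₁.2 r x⟩
    · refine ⟨hj₂inj, fun r x => ?_⟩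
      have hfun : θ ∘ (j₂ ∘ x) = g₂ ∘ x := funext fun t => hθj₂ (x t)
      show reduct i SC r x ↔ S₀ r (θ ∘ (j₂ ∘ x))
      rw [hfun]
      exact hg₂.2 r x
  choose S₀ hS₀ hinl hj₂e using key
  refine ⟨P₀, fun r x => S₀ r.1 r.2 x, ⟨inferInstance, fun i => hS₀ i⟩,
    Sum.inl, j₂, ?_, ?_, ?_, ?_, ?_⟩
  · exact ⟨Sum.inl_injective, fun r x => (hinl r.1).2 r.2 x⟩
  · exact ⟨hj₂inj, fun r x => (hj₂e r.1).2 r.2 x⟩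
  · exact funext fun a => (hj₂f₂ a).symm
  · ext z
    constructor
    · rintro ⟨⟨b, hb⟩, ⟨c, hc⟩⟩
      by_cases h : ∃ a, f₂ a = c
      · obtain ⟨a, ha⟩ := h
        refine ⟨a, ?_⟩
        show Sum.inl (f₁ a) = z
        rw [← hj₂f₂ a, ha, hc]
      · exfalso
        rw [hj₂inr c h] at hc
        rw [← hb] at hc
        exact absurd hc (by simp)
    · rintro ⟨a, ha⟩
      exact ⟨⟨f₁ a, ha⟩, ⟨f₂ a, by rw [hj₂f₂]; exact ha⟩⟩
  · have hfun : j₂ ∘ f₂ = Sum.inl ∘ f₁ := funext fun a => hj₂f₂ a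
    rw [hfun]

/-! ### Combining structures over a split of the languages -/

def frontStruc {m : ℕ} (L : Fin (m + 1) → RelLang) {X : Type}
    (S : RelStruc (unionLang L) X) :
    RelStruc (unionLang (fun i : Fin m => L i.castSucc)) X :=
  fun r x => S ⟨r.1.castSucc, r.2⟩ x

def combStruc {m : ℕ} (L : Fin (m + 1) → RelLang) {X : Type}
    (S₁ : RelStruc (unionLang (fun i : Fin m => L i.castSucc)) X)
    (S₂ : RelStruc (L (Fin.last m)) X) : RelStruc (unionLang L) X :=
  fun r =>
    Fin.lastCases (motive := fun j => ∀ ρ : (L j).Rel, (Fin ((L j).ar ρ) → X) → Prop)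
      (fun ρ x => S₂ ρ x) (fun i ρ x => S₁ ⟨i, ρ⟩ x) r.1 r.2

theorem combStruc_app_cast {m : ℕ} (L : Fin (m + 1) → RelLang) {X : Type}
    (S₁ : RelStruc (unionLang (fun i : Fin m => L i.castSucc)) X)
    (S₂ : RelStruc (L (Fin.last m)) X) (i : Fin m) (ρ : (L i.castSucc).Rel)
    (x : Fin ((L i.castSucc).ar ρ) → X) :
    combStruc L S₁ S₂ ⟨i.castSucc, ρ⟩ x = S₁ ⟨i, ρ⟩ x := by
  show Fin.lastCases (motive := fun j => ∀ ρ : (L j).Rel, (Fin ((L j).ar ρ) → X) → Prop)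
    _ _ i.castSucc ρ x = _
  rw [Fin.lastCases_castSucc]

theorem combStruc_app_last {m : ℕ} (L : Fin (m + 1) → RelLang) {X : Type}
    (S₁ : RelStruc (unionLang (fun i : Fin m => L i.castSucc)) X)
    (S₂ : RelStruc (L (Fin.last m)) X) (ρ : (L (Fin.last m)).Rel)
    (x : Fin ((L (Fin.last m)).ar ρ) → X) :
    combStruc L S₁ S₂ ⟨Fin.last m, ρ⟩ x = S₂ ρ x := by
  show Fin.lastCases (motive := fun j => ∀ ρ : (L j).Rel, (Fin ((L j).ar ρ) → X) → Prop)
    _ _ (Fin.last m) ρ x = _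
  rw [Fin.lastCases_last]

theorem combStruc_reduct_cast {m : ℕ} (L : Fin (m + 1) → RelLang) {X : Type}
    (S₁ : RelStruc (unionLang (fun i : Fin m => L i.castSucc)) X)
    (S₂ : RelStruc (L (Fin.last m)) X) (i : Fin m) :
    reduct i.castSucc (combStruc L S₁ S₂) = reduct i S₁ := by
  funext ρ x
  exact propext (by rw [show reduct i.castSucc (combStruc L S₁ S₂) ρ x =
    combStruc L S₁ S₂ ⟨i.castSucc, ρ⟩ x from rfl, combStruc_app_cast]; exact Iff.rfl)

theorem combStruc_reduct_last {m : ℕ} (L : Fin (m + 1) → RelLang) {X : Type}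
    (S₁ : RelStruc (unionLang (fun i : Fin m => L i.castSucc)) X)
    (S₂ : RelStruc (L (Fin.last m)) X) :
    reduct (Fin.last m) (combStruc L S₁ S₂) = S₂ := by
  funext ρ x
  exact propext (by rw [show reduct (Fin.last m) (combStruc L S₁ S₂) ρ x =
    combStruc L S₁ S₂ ⟨Fin.last m, ρ⟩ x from rfl, combStruc_app_last])

theorem isEmbS_comb_iff {m : ℕ} (L : Fin (m + 1) → RelLang) {X C : Type}
    (SX : RelStruc (unionLang L) X)
    (S₁ : RelStruc (unionLang (fun i : Fin m => L i.castSucc)) C)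
    (S₂ : RelStruc (L (Fin.last m)) C) (f : X → C) :
    IsEmbS SX (combStruc L S₁ S₂) f ↔
      (IsEmbS (frontStruc L SX) S₁ f ∧ IsEmbS (reduct (Fin.last m) SX) S₂ f) := by
  constructor
  · intro h
    refine ⟨⟨h.1, fun r x => ?_⟩, ⟨h.1, fun ρ x => ?_⟩⟩
    · have h2 := h.2 ⟨r.1.castSucc, r.2⟩ x
      erw [combStruc_app_cast] at h2
      exact h2
    · have h2 := h.2 ⟨Fin.last m, ρ⟩ x
      erw [combStruc_app_last] at h2
      exact h2
  · rintro ⟨h₁, h₂⟩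
    refine ⟨h₁.1, fun r x => ?_⟩
    obtain ⟨i, ρ⟩ := r
    induction i using Fin.lastCases with
    | last =>
        erw [combStruc_app_last]
        exact h₂.2 ρ x
    | cast i' =>
        erw [combStruc_app_cast]
        exact h₁.2 ⟨i', ρ⟩ x

def combStruc1 {L : Fin 1 → RelLang} {X : Type} (S₀ : RelStruc (L 0) X) :
    RelStruc (unionLang L) X :=
  fun r =>
    Fin.cases (motive := fun j => ∀ ρ : (L j).Rel, (Fin ((L j).ar ρ) → X) → Prop)
      (fun ρ x => S₀ ρ x) (fun i => i.elim0) r.1 r.2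

theorem combStruc1_app {L : Fin 1 → RelLang} {X : Type} (S₀ : RelStruc (L 0) X)
    (ρ : (L 0).Rel) (x : Fin ((L 0).ar ρ) → X) :
    combStruc1 S₀ ⟨0, ρ⟩ x = S₀ ρ x := by
  show Fin.cases (motive := fun j => ∀ ρ : (L j).Rel, (Fin ((L j).ar ρ) → X) → Prop)
    _ _ (0 : Fin 1) ρ x = _
  rw [Fin.cases_zero]

theorem combStruc1_reduct {L : Fin 1 → RelLang} {X : Type} (S₀ : RelStruc (L 0) X) :
    reduct 0 (combStruc1 S₀) = S₀ := by
  funext ρ x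
  exact propext (by rw [show reduct 0 (combStruc1 S₀) ρ x =
    combStruc1 S₀ ⟨0, ρ⟩ x from rfl, combStruc1_app])

theorem isEmbS_comb1_iff {L : Fin 1 → RelLang} {X C : Type}
    (SX : RelStruc (unionLang L) X) (S₀ : RelStruc (L 0) C) (f : X → C) :
    IsEmbS SX (combStruc1 S₀) f ↔ IsEmbS (reduct 0 SX) S₀ f := by
  constructor
  · intro h
    refine ⟨h.1, fun ρ x => ?_⟩
    have h2 := h.2 ⟨0, ρ⟩ x
    erw [combStruc1_app] at h2
    exact h2
  · intro h
    refine ⟨h.1, fun r x => ?_⟩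
    obtain ⟨i, ρ⟩ := r
    have h0 : i = 0 := Subsingleton.elim i 0
    subst h0
    erw [combStruc1_app]
    exact h.2 ρ x

/-! ### Main induction -/

theorem mainAux : ∀ (n : ℕ), 1 ≤ n → ∀ (L : Fin n → RelLang)
    (K : ∀ i : Fin n, ∀ A : Type, RelStruc (L i) A → Prop),
    (∀ i A SA, K i A SA → Finite A) →
    (∀ i, HP (L i) (K i)) →
    (∀ i, SAP (L i) (K i)) →
    (∀ i, RamseyClass (L i) (K i)) →
    RamseyClass (unionLang L) (fun A S => Finite A ∧ ∀ i : Fin n, K i A (reduct i S)) := by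
  intro n
  induction n with
  | zero => intro h; exact absurd h (by omega)
  | succ m ih =>
    intro _ L K hKfin hHP hSAP hRam
    rcases Nat.eq_zero_or_pos m with hm | hm
    · subst hm
      intro k hk A B SA SB hA hB hf
      obtain ⟨f₀, hf₀⟩ := hf
      obtain ⟨C, SC₀, hC, W⟩ := hRam 0 k hk A B (reduct 0 SA) (reduct 0 SB)
        (hA.2 0) (hB.2 0) ⟨f₀, reduct_embS hf₀ 0⟩
      refine ⟨C, combStruc1 SC₀, ⟨hKfin 0 C SC₀ hC, fun i => ?_⟩, fun χ => ?_⟩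
      · have h0 : i = 0 := @Subsingleton.elim (Fin 1) _ i 0
        subst h0
        rw [combStruc1_reduct]
        exact hC
      · obtain ⟨w₀, i, hmono⟩ := W (fun p =>
          χ ⟨p.1, (isEmbS_comb1_iff SA SC₀ p.1).mpr p.2⟩)
        refine ⟨⟨w₀.1, (isEmbS_comb1_iff SB SC₀ w₀.1).mpr w₀.2⟩, i, fun e => ?_⟩
        exact hmono ⟨e.1, reduct_embS e.2 0⟩
    · intro k hk A B SA SB hA hB hf
      obtain ⟨f₀, hf₀⟩ := hf
      have hRam₁ := ih hm (fun i : Fin m => L i.castSucc) (fun i => K i.castSucc)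
        (fun i A SA h => hKfin i.castSucc A SA h) (fun i => hHP i.castSucc)
        (fun i => hSAP i.castSucc) (fun i => hRam i.castSucc)
      have hHP₁ := prodHP (fun i : Fin m => L i.castSucc) (fun i => K i.castSucc)
        (fun i => hHP i.castSucc)
      have hSAP₁ := prodSAP (fun i : Fin m => L i.castSucc) (fun i => K i.castSucc)
        (fun i => hHP i.castSucc) (fun i => hSAP i.castSucc)
      obtain ⟨C, SC₁, SC₂, hC₁, hC₂, Wp⟩ :=
        corePair (fun A SA h => h.1) (hKfin (Fin.last m)) hHP₁ (hHP (Fin.last m))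
          hSAP₁ (hSAP (Fin.last m)) hRam₁ (hRam (Fin.last m)) k hk A B
          (frontStruc L SA) (reduct (Fin.last m) SA) (frontStruc L SB) (reduct (Fin.last m) SB)
          ⟨hA.1, fun i => hA.2 i.castSucc⟩ (hA.2 (Fin.last m))
          ⟨hB.1, fun i => hB.2 i.castSucc⟩ (hB.2 (Fin.last m))
          f₀ ⟨hf₀.1, fun r x => hf₀.2 ⟨r.1.castSucc, r.2⟩ x⟩ (reduct_embS hf₀ (Fin.last m))
      refine ⟨C, combStruc L SC₁ SC₂, ⟨hC₁.1, fun i => ?_⟩, fun χ => ?_⟩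
      · induction i using Fin.lastCases with
        | last =>
            rw [combStruc_reduct_last]
            exact hC₂
        | cast i' =>
            rw [combStruc_reduct_cast]
            exact hC₁.2 i'
      · obtain ⟨wp, i, hmono⟩ := Wp (fun p =>
          χ ⟨p.1, (isEmbS_comb_iff L SA SC₁ SC₂ p.1).mpr p.2⟩)
        refine ⟨⟨wp.1, (isEmbS_comb_iff L SB SC₁ SC₂ wp.1).mpr wp.2⟩, i, fun e => ?_⟩
        exact hmono ⟨e.1, ⟨⟨e.2.1, fun r x => e.2.2 ⟨r.1.castSucc, r.2⟩ x⟩,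
          reduct_embS e.2 (Fin.last m)⟩⟩

/-- Sokić's theorem: if `K 0, …, K (n-1)` are classes of finite structures over
pairwise disjoint relational languages, each having HP, JEP, SAP and the Ramsey
property, then the class `⊗ᵢ Kᵢ` of all finite structures over the union language
whose `Σᵢ`-reduct belongs to `Kᵢ` for every `i` has the Ramsey property. -/
theorem sokic_product_ramsey (n : ℕ) (hn : 2 ≤ n) (L : Fin n → RelLang)
    (K : ∀ i : Fin n, ∀ A : Type, RelStruc (L i) A → Prop)
    (hKfin : ∀ i A SA, K i A SA → Finite A)
    (hHP : ∀ i, HP (L i) (K i))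
    (hJEP : ∀ i, JEP (L i) (K i))
    (hSAP : ∀ i, SAP (L i) (K i))
    (hRamsey : ∀ i, RamseyClass (L i) (K i)) :
    RamseyClass (unionLang L)
      (fun A S => Finite A ∧ ∀ i : Fin n, K i A (reduct i S)) := by
  exact mainAux n (by omega) L K hKfin hHP hSAP hRamsey
end

section
/- Let Θ be a relational first-order language, let C be a class of finite Θ-structures, and let K be a subclass of C. Suppose C has the Ramsey property and K is closed for binary diagrams in C, meaning: for all A, B ∈ K, all finite index sets I and J, all functions j₁, j₂ : I → J, and all families of embeddings (u_p : A → B)_{p ∈ I} and (v_p : A → B)_{p ∈ I}, if there exist a structure D ∈ C and embeddings (e_j : B → D)_{j ∈ J} such that e_{j₁(p)} ∘ u_p = e_{j₂(p)} ∘ v_p for all p ∈ I, then there exist a structure D' ∈ K and embeddings (e'_j : B → D')_{j ∈ J} such that e'_{j₁(p)} ∘ u_p = e'_{j₂(p)} ∘ v_p for all p ∈ I. Then K has the Ramsey property. -/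
/-- Transfer of the Ramsey property to a subclass closed for binary diagrams:
if `C` is a class of finite `L`-structures with the Ramsey property and `K ⊆ C`
is closed for binary diagrams in `C`, then `K` has the Ramsey property. -/
theorem ramsey_transfer_binary_diagrams (L : RelLang)
    (C K : ∀ A : Type, RelStruc L A → Prop)
    (hCfin : ∀ A SA, C A SA → Finite A)
    (hsub : ∀ A SA, K A SA → C A SA)
    (hCRamsey : RamseyClass L C)
    (hclosed : ∀ (A B : Type) (SA : RelStruc L A) (SB : RelStruc L B),
      K A SA → K B SB →
      ∀ (I J : Type), Finite I → Finite J →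
      ∀ (j₁ j₂ : I → J)
        (u v : I → {f : A → B // IsEmbS SA SB f}),
        (∃ (D : Type) (SD : RelStruc L D), C D SD ∧
          ∃ e : J → {g : B → D // IsEmbS SB SD g},
            ∀ p : I, (e (j₁ p)).1 ∘ (u p).1 = (e (j₂ p)).1 ∘ (v p).1) →
        ∃ (D' : Type) (SD' : RelStruc L D'), K D' SD' ∧
          ∃ e' : J → {g : B → D' // IsEmbS SB SD' g},
            ∀ p : I, (e' (j₁ p)).1 ∘ (u p).1 = (e' (j₂ p)).1 ∘ (v p).1) :
    RamseyClass L K := by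
  classical
  intro k hk A B SA SB hKA hKB hAB
  obtain ⟨D, SD, hCD, hD⟩ := hCRamsey k hk A B SA SB (hsub _ _ hKA) (hsub _ _ hKB) hAB
  haveI : Finite A := hCfin A SA (hsub _ _ hKA)
  haveI : Finite B := hCfin B SB (hsub _ _ hKB)
  haveI : Finite D := hCfin D SD hCD
  let J := {g : B → D // IsEmbS SB SD g}
  let E := {f : A → B // IsEmbS SA SB f}
  let I := {q : (J × J) × (E × E) // q.1.1.1 ∘ q.2.1.1 = q.1.2.1 ∘ q.2.2.1}
  obtain ⟨D', SD', hKD', e', he'⟩ :=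
    hclosed A B SA SB hKA hKB I J inferInstance inferInstance
      (fun q => q.1.1.1) (fun q => q.1.1.2) (fun q => q.1.2.1) (fun q => q.1.2.2)
      ⟨D, SD, hCD, fun j => j, fun p => p.2⟩
  refine ⟨D', SD', hKD', ?_⟩
  intro χ'
  have i0 : Fin k := ⟨0, by omega⟩
  let χ : {f : A → D // IsEmbS SA SD f} → Fin k := fun f =>
    if h : ∃ g : J, ∃ u : E, f.1 = g.1 ∘ u.1 then
      χ' ⟨(e' h.choose).1 ∘ h.choose_spec.choose.1,
          h.choose_spec.choose.2.comp (e' h.choose).2⟩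
    else i0
  have key : ∀ (g : J) (u : E),
      χ ⟨g.1 ∘ u.1, u.2.comp g.2⟩ = χ' ⟨(e' g).1 ∘ u.1, u.2.comp (e' g).2⟩ := by
    intro g u
    have h : ∃ g' : J, ∃ u' : E, (g.1 ∘ u.1 : A → D) = g'.1 ∘ u'.1 := ⟨g, u, rfl⟩
    have hred : χ ⟨g.1 ∘ u.1, u.2.comp g.2⟩ =
        χ' ⟨(e' h.choose).1 ∘ h.choose_spec.choose.1,
            h.choose_spec.choose.2.comp (e' h.choose).2⟩ := dif_pos h
    rw [hred]
    have heq : h.choose.1 ∘ h.choose_spec.choose.1 = g.1 ∘ u.1 :=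
      h.choose_spec.choose_spec.symm
    have hI := he' ⟨((h.choose, g), (h.choose_spec.choose, u)), heq⟩
    exact congrArg χ' (Subtype.ext hI)
  obtain ⟨w, i, hw⟩ := hD χ
  refine ⟨e' w, i, fun e => ?_⟩
  rw [← key w e]
  exact hw e
end

section
/- Let T = ({1, …, t}, ≼) be a template, let k₁, …, k_m be its isolated points, let T' be T with the isolated points removed, and let (i₁, j₁), …, (i_s, j_s) list all pairs of elements of T' with i_α strictly below j_α in T' and j_α maximal in T'. Then the class K̄(T) is closed for binary diagrams in C(s, m): for all A, B ∈ K̄(T), all finite index sets I and J, all functions j₁̂, j₂̂ : I → J, and all families of embeddings (u_p : A → B)_{p ∈ I} and (v_p : A → B)_{p ∈ I}, if there exist a structure D ∈ C(s, m) and embeddings (e_j : B → D)_{j ∈ J} such that e_{j₁̂(p)} ∘ u_p = e_{j₂̂(p)} ∘ v_p for all p ∈ I, then there exist a structure D' ∈ K̄(T) and embeddings (e'_j : B → D')_{j ∈ J} satisfying the same compatibility conditions e'_{j₁̂(p)} ∘ u_p = e'_{j₂̂(p)} ∘ v_p for all p ∈ I. -/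
/-- `i` is an isolated point of the template `({1,…,t}, prec)`:
it is comparable to no other element. -/
def IsolatedPt {t : ℕ} (prec : Fin t → Fin t → Prop) (i : Fin t) : Prop :=
  ∀ j, j ≠ i → ¬ prec i j ∧ ¬ prec j i

/-- `j` is a maximal element of `T' = T` minus the isolated points. -/
def MaximalInT' {t : ℕ} (prec : Fin t → Fin t → Prop) (j : Fin t) : Prop :=
  ∀ l, ¬ IsolatedPt prec l → prec j l → l = j

/-- The index (among `0,…,2s+m-1`) of the partial order `≤_{i_α}` (α-th of the
first `s` relations). -/
def loIdx {s m : ℕ} (α : Fin s) : Fin (2 * s + m) :=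
  ⟨α.1, by have := α.isLt; omega⟩

/-- The index of the linear order `≤_{j_α}` (α-th of the middle `s` relations). -/
def hiIdx {s m : ℕ} (α : Fin s) : Fin (2 * s + m) :=
  ⟨s + α.1, by have := α.isLt; omega⟩

/-- The index of the `β`-th linear order among the last `s + m` relations. -/
def linIdx {s m : ℕ} (β : Fin (s + m)) : Fin (2 * s + m) :=
  ⟨s + β.1, by have := β.isLt; omega⟩

/-- Membership in the class `K̄(T)`, via conditions (MP1)–(MP4), where
`ii, jj : Fin s → Fin t` enumerate the pairs `(i_α, j_α)`. -/
def KbarT {t s m : ℕ} (prec : Fin t → Fin t → Prop) (ii jj : Fin s → Fin t)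
    {A : Type} (R : Fin (2 * s + m) → A → A → Prop) : Prop :=
  -- (MP1)
  (∀ α : Fin s, IsPartialOrder A (R (loIdx α))) ∧
  (∀ β : Fin (s + m), IsLinearOrder A (R (linIdx β))) ∧
  -- (MP2)
  (∀ α β : Fin s, prec (ii α) (ii β) → ∀ x y, R (loIdx α) x y → R (loIdx β) x y) ∧
  -- (MP3)
  (∀ α β : Fin s, prec (ii α) (jj β) → ∀ x y, R (loIdx α) x y → R (hiIdx β) x y) ∧
  -- (MP4)
  (∀ α β : Fin s, jj α = jj β → ∀ x y, R (hiIdx α) x y ↔ R (hiIdx β) x y)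

/-- Membership in the class `C(s, m)` (indices shifted to start from `0`):
the relations with index `< s` are partial orders, the relations with index
`≥ s` are linear orders, and for each index `i < s` the linear order with
index `s + i` extends the partial order with index `i`. -/
def Csm (s m : ℕ) {A : Type} (R : Fin (2 * s + m) → A → A → Prop) : Prop :=
  (∀ i : Fin (2 * s + m), (i : ℕ) < s → IsPartialOrder A (R i)) ∧
  (∀ i : Fin (2 * s + m), s ≤ (i : ℕ) → IsLinearOrder A (R i)) ∧
  (∀ i j : Fin (2 * s + m), (i : ℕ) < s → (j : ℕ) = s + (i : ℕ) →
    ∀ x y, R i x y → R j x y)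

section AuxNewRel

variable {t s m : ℕ} (prec : Fin t → Fin t → Prop) (ii jj : Fin s → Fin t)
  (ρ : Fin s → Fin s) {D : Type} (RD : Fin (2 * s + m) → D → D → Prop)

/-- The modified relations on `D` turning a member of `C(s,m)` into a member of
`K̄(T)`: the `α`-th partial order is replaced by an intersection of old
relations dictated by the template, and the `α`-th linear order is replaced by
the old linear order of the representative `ρ α` (with `ρ` constant on fibers
of `jj`). -/
def newRel : Fin (2 * s + m) → D → D → Prop := fun i x y =>
  if h : i.1 < s then
    (∀ γ : Fin s, prec (ii ⟨i.1, h⟩) (ii γ) → RD (loIdx γ) x y) ∧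
    (∀ β : Fin s, prec (ii ⟨i.1, h⟩) (jj β) → RD (hiIdx (ρ β)) x y)
  else if h2 : i.1 < 2 * s then RD (hiIdx (ρ ⟨i.1 - s, by omega⟩)) x y
  else RD i x y

lemma newRel_lo (α : Fin s) :
    newRel prec ii jj ρ RD (loIdx α) = fun x y =>
      (∀ γ : Fin s, prec (ii α) (ii γ) → RD (loIdx γ) x y) ∧
      (∀ β : Fin s, prec (ii α) (jj β) → RD (hiIdx (ρ β)) x y) := by
  funext x y
  simp only [newRel, loIdx]
  exact dif_pos α.isLt

lemma newRel_hi (α : Fin s) :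
    newRel prec ii jj ρ RD (hiIdx α) = RD (hiIdx (ρ α)) := by
  have hα := α.isLt
  have key : ∀ h : s + α.1 - s < s, (⟨s + α.1 - s, h⟩ : Fin s) = α := fun h => by apply Fin.ext; show s + α.1 - s = α.1; omega
  funext x y
  simp only [newRel, hiIdx]
  erw [dif_neg (show ¬ (s + α.1 < s) by omega), dif_pos (show s + α.1 < 2 * s by omega)]
  simp only [key]

lemma newRel_ge (i : Fin (2 * s + m)) (h : 2 * s ≤ i.1) :
    newRel prec ii jj ρ RD i = RD i := by
  funext x y
  simp only [newRel]
  rw [dif_neg (by omega), dif_neg (by omega)]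

end AuxNewRel

/-- For every template `T`, the class `K̄(T)` is closed for binary diagrams in
`C(s, m)`, where `m` is the number of isolated points of `T` and
`(i_1, j_1), …, (i_s, j_s)` enumerates the pairs of non-isolated elements with
`i_α` strictly below `j_α` and `j_α` maximal among the non-isolated elements. -/
theorem KbarT_closed_for_binary_diagrams
    (t : ℕ) (ht : 1 ≤ t) (prec : Fin t → Fin t → Prop)
    (hprec : IsPartialOrder (Fin t) prec)
    (m : ℕ) (kk : Fin m → Fin t)
    (hkk_inj : Function.Injective kk)
    (hkk_range : ∀ p : Fin t, IsolatedPt prec p ↔ ∃ β : Fin m, kk β = p)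
    (s : ℕ) (ii jj : Fin s → Fin t)
    (hij_inj : Function.Injective (fun α => (ii α, jj α)))
    (hij_range : ∀ p q : Fin t,
      (¬ IsolatedPt prec p ∧ ¬ IsolatedPt prec q ∧ prec p q ∧ p ≠ q ∧
        MaximalInT' prec q) ↔ ∃ α : Fin s, ii α = p ∧ jj α = q)
    (A B : Type) [Fintype A] [Fintype B]
    (RA : Fin (2 * s + m) → A → A → Prop) (RB : Fin (2 * s + m) → B → B → Prop)
    (hA : KbarT prec ii jj RA) (hB : KbarT prec ii jj RB)
    (I J : Type) [Finite I] [Finite J]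
    (j₁ j₂ : I → J)
    (u v : I → {f : A → B // IsEmb RA RB f})
    (hcone : ∃ (D : Type) (_ : Fintype D) (RD : Fin (2 * s + m) → D → D → Prop),
      Csm s m RD ∧
      ∃ e : J → {g : B → D // IsEmb RB RD g},
        ∀ p : I, (e (j₁ p)).1 ∘ (u p).1 = (e (j₂ p)).1 ∘ (v p).1) :
    ∃ (D' : Type) (_ : Fintype D') (RD' : Fin (2 * s + m) → D' → D' → Prop),
      KbarT prec ii jj RD' ∧
      ∃ e' : J → {g : B → D' // IsEmb RB RD' g},
        ∀ p : I, (e' (j₁ p)).1 ∘ (u p).1 = (e' (j₂ p)).1 ∘ (v p).1 := by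
  obtain ⟨D, instD, RD, hD, e, he⟩ := hcone
  -- a representative index for each fiber of `jj`
  have hne : ∀ β : Fin s, (Finset.univ.filter fun α => jj α = jj β).Nonempty :=
    fun β => ⟨β, by simp⟩
  set ρ : Fin s → Fin s :=
    fun β => (Finset.univ.filter fun α => jj α = jj β).min' (hne β) with hρdef
  have hρ_jj : ∀ β, jj (ρ β) = jj β := by
    intro β
    have := Finset.min'_mem _ (hne β)
    exact (Finset.mem_filter.mp this).2
  have hρ_eq : ∀ α β, jj α = jj β → ρ α = ρ β := by
    intro α β h
    simp only [hρdef, h]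
  -- basic facts about `RD`
  have hDlo : ∀ γ : Fin s, IsPartialOrder D (RD (loIdx γ)) :=
    fun γ => hD.1 (loIdx γ) γ.isLt
  have hDhi : ∀ γ : Fin s, IsLinearOrder D (RD (hiIdx γ)) :=
    fun γ => hD.2.1 (hiIdx γ) (Nat.le_add_right s γ.1)
  -- the new relations on `D`
  refine ⟨D, instD, newRel prec ii jj ρ RD, ⟨?_, ?_, ?_, ?_, ?_⟩, ?_⟩
  · -- MP1: partial orders
    intro α
    rw [newRel_lo]
    refine { refl := ?_, trans := ?_, antisymm := ?_ }
    · intro x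
      exact ⟨fun γ _ => (hDlo γ).refl x, fun β _ => (hDhi (ρ β)).refl x⟩
    · rintro x y z ⟨h1, h2⟩ ⟨h3, h4⟩
      exact ⟨fun γ hγ => (hDlo γ).trans x y z (h1 γ hγ) (h3 γ hγ),
        fun β hβ => (hDhi (ρ β)).trans x y z (h2 β hβ) (h4 β hβ)⟩
    · rintro x y ⟨h1, _⟩ ⟨h3, _⟩
      exact (hDlo α).antisymm x y (h1 α (hprec.refl _)) (h3 α (hprec.refl _))
  · -- MP1: linear orders
    intro β
    by_cases hβ : β.1 < s
    · have : linIdx β = hiIdx (⟨β.1, hβ⟩ : Fin s) := rfl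
      rw [this, newRel_hi]
      exact hDhi _
    · rw [newRel_ge prec ii jj ρ RD (linIdx β) (by simp [linIdx]; omega)]
      exact hD.2.1 (linIdx β) (by simp [linIdx])
  · -- MP2
    intro α β hαβ x y
    rw [newRel_lo, newRel_lo]
    rintro ⟨h1, h2⟩
    exact ⟨fun γ hγ => h1 γ (hprec.trans _ _ _ hαβ hγ),
      fun δ hδ => h2 δ (hprec.trans _ _ _ hαβ hδ)⟩
  · -- MP3
    intro α β hαβ x y
    rw [newRel_lo, newRel_hi]
    rintro ⟨_, h2⟩
    exact h2 β hαβ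
  · -- MP4
    intro α β hαβ x y
    rw [newRel_hi, newRel_hi, hρ_eq α β hαβ]
  · -- the embeddings
    have hemb : ∀ j : J, IsEmb RB (newRel prec ii jj ρ RD) (e j).1 := by
      intro j
      refine ⟨(e j).2.1, ?_⟩
      have hej := (e j).2.2
      intro i b b'
      by_cases h1 : i.1 < s
      · have : i = loIdx (⟨i.1, h1⟩ : Fin s) := rfl
        rw [this, newRel_lo]
        set α : Fin s := ⟨i.1, h1⟩
        constructor
        · intro hb
          constructor
          · intro γ hγ
            exact (hej (loIdx γ) b b').mp (hB.2.2.1 α γ hγ b b' hb)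
          · intro β hβ
            have : prec (ii α) (jj (ρ β)) := by rw [hρ_jj]; exact hβ
            exact (hej (hiIdx (ρ β)) b b').mp (hB.2.2.2.1 α (ρ β) this b b' hb)
        · rintro ⟨h1', _⟩
          exact (hej (loIdx α) b b').mpr (h1' α (hprec.refl _))
      · by_cases h2 : i.1 < 2 * s
        · have hα : i = hiIdx (⟨i.1 - s, by omega⟩ : Fin s) := by
            apply Fin.ext; simp [hiIdx]; omega
          set α : Fin s := ⟨i.1 - s, by omega⟩
          rw [hα, newRel_hi]
          have := hB.2.2.2.2 α (ρ α) (hρ_jj α).symm b b'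
          rw [this]
          exact hej (hiIdx (ρ α)) b b'
        · rw [newRel_ge prec ii jj ρ RD i (by omega)]
          exact hej i b b'
    exact ⟨fun j => ⟨(e j).1, hemb j⟩, he⟩
end

section
/- The class of all finite posets with a linear extension has the strong amalgamation property: for all structures A, B, C in the class and all embeddings f₁ : A → B and f₂ : A → C, there exist a structure D in the class and embeddings g₁ : B → D and g₂ : C → D such that g₁ ∘ f₁ = g₂ ∘ f₂ and g₁(B) ∩ g₂(C) = g₁(f₁(A)) = g₂(f₂(A)). -/
def EPos {A : Type} (R : Fin 2 → A → A → Prop) : Prop :=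
  IsPartialOrder A (R 0) ∧ IsLinearOrder A (R 1) ∧ ∀ x y, R 0 x y → R 1 x y

section Aux
variable {A B C : Type}
/-- Amalgam partial order. -/
def AmD0 (RB : Fin 2 → B → B → Prop) (RC : Fin 2 → C → C → Prop) (f₁ : A → B) (f₂ : A → C) : B ⊕ {c : C // c ∉ Set.range f₂} → B ⊕ {c : C // c ∉ Set.range f₂} → Prop
  | .inl b, .inl b' => RB 0 b b'
  | .inl b, .inr c => ∃ a, RB 0 b (f₁ a) ∧ RC 0 (f₂ a) c.1
  | .inr c, .inl b => ∃ a, RC 0 c.1 (f₂ a) ∧ RB 0 (f₁ a) b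
  | .inr c, .inr c' => RC 0 c.1 c'.1

/-- Amalgam linear order. -/
def AmD1 (RB : Fin 2 → B → B → Prop) (RC : Fin 2 → C → C → Prop) (f₁ : A → B) (f₂ : A → C) : B ⊕ {c : C // c ∉ Set.range f₂} → B ⊕ {c : C // c ∉ Set.range f₂} → Prop
  | .inl b, .inl b' => RB 1 b b'
  | .inl b, .inr c => ∃ a, RB 1 b (f₁ a) ∧ RC 1 (f₂ a) c.1
  | .inr c, .inl b => ¬ ∃ a, RB 1 b (f₁ a) ∧ RC 1 (f₂ a) c.1
  | .inr c, .inr c' => RC 1 c.1 c'.1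

open Classical in
noncomputable def Amg2 (f₁ : A → B) (f₂ : A → C) (c : C) : B ⊕ {c : C // c ∉ Set.range f₂} :=
  if h : c ∈ Set.range f₂ then .inl (f₁ h.choose) else .inr ⟨c, h⟩

lemma Amg2_f₂ {f₁ : A → B} {f₂ : A → C} (hinj : Function.Injective f₂) (a : A) :
    Amg2 f₁ f₂ (f₂ a) = .inl (f₁ a) := by
  have h : f₂ a ∈ Set.range f₂ := ⟨a, rfl⟩
  have : h.choose = a := hinj h.choose_spec
  simp [Amg2, h, this]

end Aux

/-- The class of all finite posets with a linear extension has the strong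
amalgamation property. -/
theorem finite_posets_with_linear_extension_strong_amalgamation
    (A B C : Type) [Fintype A] [Fintype B] [Fintype C]
    (RA : Fin 2 → A → A → Prop) (RB : Fin 2 → B → B → Prop) (RC : Fin 2 → C → C → Prop)
    (hA : EPos RA) (hB : EPos RB) (hC : EPos RC)
    (f₁ : A → B) (f₂ : A → C)
    (hf₁ : IsEmb RA RB f₁) (hf₂ : IsEmb RA RC f₂) :
    ∃ (D : Type) (_ : Fintype D) (RD : Fin 2 → D → D → Prop),
      EPos RD ∧
      ∃ (g₁ : B → D) (g₂ : C → D),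
        IsEmb RB RD g₁ ∧ IsEmb RC RD g₂ ∧
        g₁ ∘ f₁ = g₂ ∘ f₂ ∧
        Set.range g₁ ∩ Set.range g₂ = Set.range (g₁ ∘ f₁) ∧
        Set.range (g₁ ∘ f₁) = Set.range (g₂ ∘ f₂) := by
  classical
  obtain ⟨hB0, hB1, hBle⟩ := hB
  obtain ⟨hC0, hC1, hCle⟩ := hC
  obtain ⟨hA0, hA1, hAle⟩ := hA
  obtain ⟨hf₁i, hf₁r⟩ := hf₁
  obtain ⟨hf₂i, hf₂r⟩ := hf₂
  -- transfer lemmas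
  have tBA0 : ∀ a a', RB 0 (f₁ a) (f₁ a') → RA 0 a a' := fun a a' h => (hf₁r 0 a a').mpr h
  have tAB0 : ∀ a a', RA 0 a a' → RB 0 (f₁ a) (f₁ a') := fun a a' h => (hf₁r 0 a a').mp h
  have tCA0 : ∀ a a', RC 0 (f₂ a) (f₂ a') → RA 0 a a' := fun a a' h => (hf₂r 0 a a').mpr h
  have tAC0 : ∀ a a', RA 0 a a' → RC 0 (f₂ a) (f₂ a') := fun a a' h => (hf₂r 0 a a').mp h
  have tBA1 : ∀ a a', RB 1 (f₁ a) (f₁ a') → RA 1 a a' := fun a a' h => (hf₁r 1 a a').mpr h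
  have tAB1 : ∀ a a', RA 1 a a' → RB 1 (f₁ a) (f₁ a') := fun a a' h => (hf₁r 1 a a').mp h
  have tCA1 : ∀ a a', RC 1 (f₂ a) (f₂ a') → RA 1 a a' := fun a a' h => (hf₂r 1 a a').mpr h
  have tAC1 : ∀ a a', RA 1 a a' → RC 1 (f₂ a) (f₂ a') := fun a a' h => (hf₂r 1 a a').mp h
  have tBC0 : ∀ a a', RB 0 (f₁ a) (f₁ a') → RC 0 (f₂ a) (f₂ a') := fun a a' h => tAC0 _ _ (tBA0 _ _ h)
  have tCB0 : ∀ a a', RC 0 (f₂ a) (f₂ a') → RB 0 (f₁ a) (f₁ a') := fun a a' h => tAB0 _ _ (tCA0 _ _ h)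
  have tBC1 : ∀ a a', RB 1 (f₁ a) (f₁ a') → RC 1 (f₂ a) (f₂ a') := fun a a' h => tAC1 _ _ (tBA1 _ _ h)
  have tCB1 : ∀ a a', RC 1 (f₂ a) (f₂ a') → RB 1 (f₁ a) (f₁ a') := fun a a' h => tAB1 _ _ (tCA1 _ _ h)
  set D := B ⊕ {c : C // c ∉ Set.range f₂} with hD
  have hg2 : ∀ c : C, (∃ a, c = f₂ a ∧ Amg2 f₁ f₂ c = .inl (f₁ a)) ∨
      (∃ h : c ∉ Set.range f₂, Amg2 f₁ f₂ c = .inr ⟨c, h⟩) := by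
    intro c
    by_cases h : c ∈ Set.range f₂
    · obtain ⟨a, rfl⟩ := h
      exact .inl ⟨a, rfl, Amg2_f₂ hf₂i a⟩
    · exact .inr ⟨h, by simp [Amg2, h]⟩
  set D := B ⊕ {c : C // c ∉ Set.range f₂} with hD
  -- key order facts
  have D0refl : ∀ x : D, AmD0 RB RC f₁ f₂ x x := by
    rintro (b | c)
    · exact hB0.refl b
    · exact hC0.refl c.1
  have D0trans : ∀ x y z : D, AmD0 RB RC f₁ f₂ x y → AmD0 RB RC f₁ f₂ y z →
      AmD0 RB RC f₁ f₂ x z := by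
    rintro (b | c) (b' | c') (b'' | c'') h h' <;> simp only [AmD0] at *
    · exact hB0.trans _ _ _ h h'
    · obtain ⟨a, hb, hc⟩ := h'
      exact ⟨a, hB0.trans _ _ _ h hb, hc⟩
    · obtain ⟨a, hb, hc⟩ := h
      obtain ⟨a', hc', hb'⟩ := h'
      have : RB 0 (f₁ a) (f₁ a') := tCB0 _ _ (hC0.trans _ _ _ hc hc')
      exact hB0.trans _ _ _ hb (hB0.trans _ _ _ this hb')
    · obtain ⟨a, hb, hc⟩ := h
      exact ⟨a, hb, hC0.trans _ _ _ hc h'⟩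
    · obtain ⟨a, hc, hb⟩ := h
      exact ⟨a, hc, hB0.trans _ _ _ hb h'⟩
    · obtain ⟨a, hc, hb⟩ := h
      obtain ⟨a', hb', hc'⟩ := h'
      have : RC 0 (f₂ a) (f₂ a') := tBC0 _ _ (hB0.trans _ _ _ hb hb')
      exact hC0.trans _ _ _ hc (hC0.trans _ _ _ this hc')
    · obtain ⟨a, hc, hb⟩ := h'
      exact ⟨a, hC0.trans _ _ _ h hc, hb⟩
    · exact hC0.trans _ _ _ h h'
  have D0antisymm : ∀ x y : D, AmD0 RB RC f₁ f₂ x y → AmD0 RB RC f₁ f₂ y x → x = y := by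
    rintro (b | c) (b' | c') h h' <;> simp only [AmD0] at *
    · exact congrArg Sum.inl (hB0.antisymm _ _ h h')
    · obtain ⟨a, hb, hc⟩ := h
      obtain ⟨a', hc', hb'⟩ := h'
      have haa : RA 0 a' a := tBA0 _ _ (hB0.trans _ _ _ hb' hb)
      have : RC 0 c'.1 (f₂ a) := hC0.trans _ _ _ hc' (tAC0 _ _ haa)
      have : c'.1 = f₂ a := hC0.antisymm _ _ this hc
      exact absurd ⟨a, this.symm⟩ c'.2
    · obtain ⟨a, hc, hb⟩ := h
      obtain ⟨a', hb', hc'⟩ := h'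
      have haa : RA 0 a a' := tBA0 _ _ (hB0.trans _ _ _ hb hb')
      have : RC 0 c.1 (f₂ a') := hC0.trans _ _ _ hc (tAC0 _ _ haa)
      have : c.1 = f₂ a' := hC0.antisymm _ _ this hc'
      exact absurd ⟨a', this.symm⟩ c.2
    · exact congrArg Sum.inr (Subtype.ext (hC0.antisymm _ _ h h'))
  have D1refl : ∀ x : D, AmD1 RB RC f₁ f₂ x x := by
    rintro (b | c)
    · exact hB1.refl b
    · exact hC1.refl c.1
  have D1trans : ∀ x y z : D, AmD1 RB RC f₁ f₂ x y → AmD1 RB RC f₁ f₂ y z →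
      AmD1 RB RC f₁ f₂ x z := by
    rintro (b | c) (b' | c') (b'' | c'') h h' <;> simp only [AmD1] at *
    · exact hB1.trans _ _ _ h h'
    · obtain ⟨a, hb, hc⟩ := h'
      exact ⟨a, hB1.trans _ _ _ h hb, hc⟩
    · -- inl b ≤ inr c' ≤ inl b''
      obtain ⟨a, hb, hc⟩ := h
      rcases hB1.total b b'' with hbb | hbb
      · exact hbb
      · exact absurd ⟨a, hB1.trans _ _ _ hbb hb, hc⟩ h'
    · obtain ⟨a, hb, hc⟩ := h
      exact ⟨a, hb, hC1.trans _ _ _ hc h'⟩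
    · intro ⟨a, hb, hc⟩
      exact h ⟨a, hB1.trans _ _ _ h' hb, hc⟩
    · -- inr c ≤ inl b' ≤ inr c''
      rcases hC1.total c.1 c''.1 with hcc | hcc
      · exact hcc
      · obtain ⟨a, hb, hc⟩ := h'
        exact absurd ⟨a, hb, hC1.trans _ _ _ hc hcc⟩ h
    · intro ⟨a, hb, hc⟩
      exact h' ⟨a, hb, hC1.trans _ _ _ hc h⟩
    · exact hC1.trans _ _ _ h h'
  have D1antisymm : ∀ x y : D, AmD1 RB RC f₁ f₂ x y → AmD1 RB RC f₁ f₂ y x → x = y := by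
    rintro (b | c) (b' | c') h h' <;> simp only [AmD1] at *
    · exact congrArg Sum.inl (hB1.antisymm _ _ h h')
    · exact absurd h h'
    · exact absurd h' h
    · exact congrArg Sum.inr (Subtype.ext (hC1.antisymm _ _ h h'))
  have D1total : ∀ x y : D, AmD1 RB RC f₁ f₂ x y ∨ AmD1 RB RC f₁ f₂ y x := by
    rintro (b | c) (b' | c') <;> simp only [AmD1]
    · exact hB1.total b b'
    · exact em _
    · exact (em _).symm
    · exact hC1.total c.1 c'.1
  have Dle : ∀ x y : D, AmD0 RB RC f₁ f₂ x y → AmD1 RB RC f₁ f₂ x y := by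
    rintro (b | c) (b' | c') h <;> simp only [AmD0, AmD1] at *
    · exact hBle _ _ h
    · obtain ⟨a, hb, hc⟩ := h
      exact ⟨a, hBle _ _ hb, hCle _ _ hc⟩
    · obtain ⟨a, hc, hb⟩ := h
      rintro ⟨a', hb', hc'⟩
      have haa : RA 1 a a' := tBA1 _ _ (hB1.trans _ _ _ (hBle _ _ hb) hb')
      have h1 : RC 1 c.1 (f₂ a') := hC1.trans _ _ _ (hCle _ _ hc) (tAC1 _ _ haa)
      have : c.1 = f₂ a' := hC1.antisymm _ _ h1 hc'
      exact absurd ⟨a', this.symm⟩ c.2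
    · exact hCle _ _ h
  refine ⟨D, Fintype.ofFinite D, ![AmD0 RB RC f₁ f₂, AmD1 RB RC f₁ f₂], ?_, Sum.inl,
    Amg2 f₁ f₂, ?_, ?_, ?_, ?_, ?_⟩
  · refine ⟨?_, ?_, ?_⟩
    · show IsPartialOrder D (AmD0 RB RC f₁ f₂)
      exact { refl := D0refl, trans := D0trans, antisymm := D0antisymm }
    · show IsLinearOrder D (AmD1 RB RC f₁ f₂)
      exact { refl := D1refl, trans := D1trans, antisymm := D1antisymm, total := D1total }
    · show ∀ x y, AmD0 RB RC f₁ f₂ x y → AmD1 RB RC f₁ f₂ x y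
      exact Dle
  · -- g₁ embedding
    refine ⟨Sum.inl_injective, ?_⟩
    intro i x y
    fin_cases i
    · show RB 0 x y ↔ AmD0 RB RC f₁ f₂ (.inl x) (.inl y)
      simp only [AmD0]
    · show RB 1 x y ↔ AmD1 RB RC f₁ f₂ (.inl x) (.inl y)
      simp only [AmD1]
  · -- g₂ embedding
    constructor
    · intro c c' h
      rcases hg2 c with ⟨a, rfl, he⟩ | ⟨hc, he⟩ <;>
        rcases hg2 c' with ⟨a', rfl, he'⟩ | ⟨hc', he'⟩ <;> rw [he, he'] at h
      · exact congrArg f₂ (hf₁i (Sum.inl_injective h))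
      · exact absurd h (by simp)
      · exact absurd h (by simp)
      · exact congrArg Subtype.val (Sum.inr_injective h)
    · intro i c c'
      rcases hg2 c with ⟨a, rfl, he⟩ | ⟨hc, he⟩ <;>
        rcases hg2 c' with ⟨a', rfl, he'⟩ | ⟨hc', he'⟩ <;> rw [he, he'] <;> fin_cases i
      · show RC 0 (f₂ a) (f₂ a') ↔ AmD0 RB RC f₁ f₂ (.inl (f₁ a)) (.inl (f₁ a'))
        exact ⟨tCB0 a a', tBC0 a a'⟩
      · show RC 1 (f₂ a) (f₂ a') ↔ AmD1 RB RC f₁ f₂ (.inl (f₁ a)) (.inl (f₁ a'))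
        exact ⟨tCB1 a a', tBC1 a a'⟩
      · show RC 0 (f₂ a) c' ↔ AmD0 RB RC f₁ f₂ (.inl (f₁ a)) (.inr ⟨c', hc'⟩)
        simp only [AmD0]
        constructor
        · intro h; exact ⟨a, hB0.refl _, h⟩
        · rintro ⟨a'', hb, hcc⟩
          exact hC0.trans _ _ _ (tBC0 _ _ hb) hcc
      · show RC 1 (f₂ a) c' ↔ AmD1 RB RC f₁ f₂ (.inl (f₁ a)) (.inr ⟨c', hc'⟩)
        simp only [AmD1]
        constructor
        · intro h; exact ⟨a, hB1.refl _, h⟩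
        · rintro ⟨a'', hb, hcc⟩
          exact hC1.trans _ _ _ (tBC1 _ _ hb) hcc
      · show RC 0 c (f₂ a') ↔ AmD0 RB RC f₁ f₂ (.inr ⟨c, hc⟩) (.inl (f₁ a'))
        simp only [AmD0]
        constructor
        · intro h; exact ⟨a', h, hB0.refl _⟩
        · rintro ⟨a'', hcc, hb⟩
          exact hC0.trans _ _ _ hcc (tBC0 _ _ hb)
      · show RC 1 c (f₂ a') ↔ AmD1 RB RC f₁ f₂ (.inr ⟨c, hc⟩) (.inl (f₁ a'))
        simp only [AmD1]
        constructor
        · rintro h ⟨a'', hb, hcc⟩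
          have haa : RA 1 a' a'' := tBA1 _ _ hb
          have h1 : RC 1 c (f₂ a'') := hC1.trans _ _ _ h (tAC1 _ _ haa)
          have : c = f₂ a'' := hC1.antisymm _ _ h1 hcc
          exact absurd ⟨a'', this.symm⟩ hc
        · intro h
          rcases hC1.total c (f₂ a') with hcc | hcc
          · exact hcc
          · exact absurd ⟨a', hB1.refl _, hcc⟩ h
      · show RC 0 c c' ↔ AmD0 RB RC f₁ f₂ (.inr ⟨c, hc⟩) (.inr ⟨c', hc'⟩)
        simp only [AmD0]
      · show RC 1 c c' ↔ AmD1 RB RC f₁ f₂ (.inr ⟨c, hc⟩) (.inr ⟨c', hc'⟩)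
        simp only [AmD1]
  · funext a
    exact (Amg2_f₂ hf₂i a).symm
  · apply Set.Subset.antisymm
    · rintro d ⟨⟨b, rfl⟩, ⟨c, hcd⟩⟩
      rcases hg2 c with ⟨a, rfl, he⟩ | ⟨hc, he⟩
      · rw [he] at hcd
        exact ⟨a, hcd⟩
      · rw [he] at hcd
        exact absurd hcd (by simp)
    · rintro d ⟨a, rfl⟩
      exact ⟨⟨f₁ a, rfl⟩, ⟨f₂ a, Amg2_f₂ hf₂i a⟩⟩
  · have : (Sum.inl ∘ f₁ : A → D) = Amg2 f₁ f₂ ∘ f₂ := by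
      funext a
      exact (Amg2_f₂ hf₂i a).symm
    rw [this]
end
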